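/- arXiv:1705.08667 — 9 statements merged into one kernel-verified Lean document; each statement's English description precedes it below -/
import Mathlib

section
/- If G is a triangle-free graph of order n and size m with no isolated vertex, then the open packing number of G satisfies ρ_o(G) ≤ n + 1 − sqrt(4m − 2n + 1). -/
open SimpleGraph

def SimpleGraph.IsOpenPacking {V : Type*} (G : SimpleGraph V) (B : Finset V) : Prop :=
  ∀ v u w, u ∈ B → w ∈ B → G.Adj v u → G.Adj v w → u = w

def SimpleGraph.IsPacking {V : Type*} (G : SimpleGraph V) (B : Finset V) : Prop :=
  ∀ u ∈ B, ∀ w ∈ B, u ≠ w →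
    Disjoint (insert u (G.neighborSet u)) (insert w (G.neighborSet w))

noncomputable def SimpleGraph.openPackingNumber {V : Type*} [Fintype V] (G : SimpleGraph V) : ℕ :=
  sSup {k | ∃ B : Finset V, G.IsOpenPacking B ∧ B.card = k}

noncomputable def SimpleGraph.packingNumber {V : Type*} [Fintype V] (G : SimpleGraph V) : ℕ :=
  sSup {k | ∃ B : Finset V, G.IsPacking B ∧ B.card = k}

/-- Mantel-type bound: in a triangle-free graph, the number of ordered adjacent pairs
inside a set `S` is at most `#S^2 / 2`. -/
lemma mantel_aux {V : Type*} [Fintype V] [DecidableEq V] (G : SimpleGraph V)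
    [DecidableRel G.Adj] (h : G.CliqueFree 3) (S : Finset V) :
    2 * ∑ v ∈ S, (S.filter (G.Adj v)).card ≤ S.card ^ 2 := by
  set e : V → ℕ := fun v => (S.filter (G.Adj v)).card with he
  set T : ℕ := ∑ v ∈ S, e v with hT
  -- key: adjacent vertices have disjoint neighborhoods inside S
  have hkey : ∀ u ∈ S, ∀ v ∈ S, G.Adj u v → e u + e v ≤ S.card := by
    intro u hu v hv huv
    have hdisj : Disjoint (S.filter (G.Adj u)) (S.filter (G.Adj v)) := by
      rw [Finset.disjoint_left]
      intro w hw1 hw2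
      simp only [Finset.mem_filter] at hw1 hw2
      exact h {u, v, w} (is3Clique_triple_iff.2 ⟨huv, hw1.2, hw2.2⟩)
    calc e u + e v = ((S.filter (G.Adj u)) ∪ (S.filter (G.Adj v))).card :=
          (Finset.card_union_of_disjoint hdisj).symm
      _ ≤ S.card := Finset.card_le_card
          (Finset.union_subset (Finset.filter_subset _ _) (Finset.filter_subset _ _))
  set A : Finset (V × V) := (S ×ˢ S).filter (fun p => G.Adj p.1 p.2) with hA
  have hAcard : A.card = T := by
    rw [hA, Finset.card_filter, Finset.sum_product, hT]
    refine Finset.sum_congr rfl fun u _ => ?_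
    exact (Finset.card_filter _ _).symm
  have hAmem : ∀ p ∈ A, p.1 ∈ S ∧ p.2 ∈ S ∧ G.Adj p.1 p.2 := by
    intro p hp
    simp only [hA, Finset.mem_filter, Finset.mem_product] at hp
    exact ⟨hp.1.1, hp.1.2, hp.2⟩
  have hsum1 : ∑ p ∈ A, e p.1 = ∑ v ∈ S, e v * e v := by
    rw [hA, Finset.sum_filter, Finset.sum_product]
    refine Finset.sum_congr rfl fun u hu => ?_
    calc (∑ y ∈ S, if G.Adj (u, y).1 (u, y).2 then e (u, y).1 else 0)
        = ∑ _y ∈ S.filter (G.Adj u), e u := (Finset.sum_filter _ _).symm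
      _ = (S.filter (G.Adj u)).card * e u := by rw [Finset.sum_const, smul_eq_mul]
      _ = e u * e u := by simp only [he]
  have hsum2 : ∑ p ∈ A, e p.2 = ∑ v ∈ S, e v * e v := by
    rw [hA, Finset.sum_filter, Finset.sum_product, Finset.sum_comm]
    refine Finset.sum_congr rfl fun v hv => ?_
    have hfl : (S.filter fun u => G.Adj u v) = S.filter (G.Adj v) := by
      apply Finset.filter_congr
      intro u hu
      exact G.adj_comm u v
    calc (∑ u ∈ S, if G.Adj (u, v).1 (u, v).2 then e (u, v).2 else 0)
        = ∑ _u ∈ S.filter (fun u => G.Adj u v), e v := (Finset.sum_filter _ _).symm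
      _ = (S.filter (fun u => G.Adj u v)).card * e v := by rw [Finset.sum_const, smul_eq_mul]
      _ = e v * e v := by rw [hfl]
  have hbig : 2 * ∑ v ∈ S, e v * e v ≤ T * S.card := by
    have h1 : ∑ p ∈ A, (e p.1 + e p.2) ≤ A.card * S.card := by
      have := Finset.sum_le_card_nsmul A (fun p => e p.1 + e p.2) S.card
        (fun p hp => hkey p.1 (hAmem p hp).1 p.2 (hAmem p hp).2.1 (hAmem p hp).2.2)
      simpa [smul_eq_mul] using this
    rw [Finset.sum_add_distrib, hsum1, hsum2, hAcard] at h1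
    omega
  have cheb : T ^ 2 ≤ S.card * ∑ v ∈ S, e v * e v := by
    have h2 : ((∑ v ∈ S, (e v : ℤ)) ^ 2) ≤ S.card * ∑ v ∈ S, (e v : ℤ) ^ 2 :=
      sq_sum_le_card_mul_sum_sq
    have h3 : ((T : ℤ)) ^ 2 ≤ (S.card : ℤ) * ∑ v ∈ S, (e v : ℤ) * (e v : ℤ) := by
      rw [hT]
      push_cast
      calc ((∑ v ∈ S, (e v : ℤ)) ^ 2) ≤ S.card * ∑ v ∈ S, (e v : ℤ) ^ 2 := h2
        _ = (S.card : ℤ) * ∑ v ∈ S, (e v : ℤ) * (e v : ℤ) := by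
            congr 1; exact Finset.sum_congr rfl fun v _ => sq (e v : ℤ) ▸ by ring
    exact_mod_cast h3
  by_cases hT0 : T = 0
  · simp [hT0]
  · have hTpos : 0 < T := Nat.pos_of_ne_zero hT0
    have : (2 * T) * T ≤ S.card ^ 2 * T := by
      calc (2 * T) * T = 2 * T ^ 2 := by ring
        _ ≤ 2 * (S.card * ∑ v ∈ S, e v * e v) := by
            exact Nat.mul_le_mul_left 2 cheb
        _ = S.card * (2 * ∑ v ∈ S, e v * e v) := by ring
        _ ≤ S.card * (T * S.card) := Nat.mul_le_mul_left _ hbig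
        _ = S.card ^ 2 * T := by ring
    exact Nat.le_of_mul_le_mul_right this hTpos

theorem stmt_1 {V : Type*} [Fintype V] (G : SimpleGraph V) [DecidableRel G.Adj]
    (h : G.CliqueFree 3) (hiso : ∀ v, 0 < G.degree v) :
    (G.openPackingNumber : ℝ) ≤ Fintype.card V + 1 -
      Real.sqrt (4 * G.edgeFinset.card - 2 * Fintype.card V + 1) := by
  classical
  set n := Fintype.card V with hn
  set m := G.edgeFinset.card with hm
  -- extract a maximum open packing B
  have hne : {k | ∃ B : Finset V, G.IsOpenPacking B ∧ B.card = k}.Nonempty :=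
    ⟨0, ∅, fun v u w hu => by simp at hu, rfl⟩
  have hbdd : BddAbove {k | ∃ B : Finset V, G.IsOpenPacking B ∧ B.card = k} := by
    refine ⟨n, fun k hk => ?_⟩
    obtain ⟨B, _, hB⟩ := hk
    rw [← hB]
    exact Finset.card_le_univ B
  obtain ⟨B, hB, hcard⟩ := Nat.sSup_mem hne hbdd
  set ρ := B.card with hρ
  have hρeq : G.openPackingNumber = ρ := hcard.symm
  set S := Bᶜ with hS
  set d : V → ℕ := fun v => (B.filter (G.Adj v)).card with hd
  set e : V → ℕ := fun v => (S.filter (G.Adj v)).card with he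
  have hd1 : ∀ v, d v ≤ 1 := by
    intro v
    refine Finset.card_le_one.2 fun u hu w hw => ?_
    simp only [hd, Finset.mem_filter] at hu hw
    exact hB v u w hu.1 hw.1 hu.2 hw.2
  have hdeg : ∀ v, d v + e v = G.degree v := by
    intro v
    have h1 : B.filter (G.Adj v) = (Finset.univ.filter (G.Adj v)).filter (fun u => u ∈ B) := by
      ext u; simp only [Finset.mem_filter, Finset.mem_univ, true_and]; tauto
    have h2 : S.filter (G.Adj v)
        = (Finset.univ.filter (G.Adj v)).filter (fun u => ¬ u ∈ B) := by
      ext u; simp only [Finset.mem_filter, Finset.mem_univ, true_and, hS, Finset.mem_compl]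
      tauto
    rw [degree, neighborFinset_eq_filter]
    simp only [hd, he, h1, h2]
    exact Finset.card_filter_add_card_filter_not _
  -- degree sum formula
  have h2m : ∑ v ∈ B, (d v + e v) + ∑ v ∈ S, (d v + e v) = 2 * m := by
    rw [Finset.sum_add_sum_compl]
    rw [hm, ← G.sum_degrees_eq_twice_card_edges]
    exact Finset.sum_congr rfl fun v _ => hdeg v
  have hsumBd : ∑ v ∈ B, d v ≤ ρ := by
    calc ∑ v ∈ B, d v ≤ ∑ v ∈ B, 1 := Finset.sum_le_sum fun v _ => hd1 v
      _ = ρ := by simp [hρ]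
  have hsumSd : ∑ v ∈ S, d v ≤ S.card := by
    calc ∑ v ∈ S, d v ≤ ∑ v ∈ S, 1 := Finset.sum_le_sum fun v _ => hd1 v
      _ = S.card := by simp
  -- symmetry: ∑_{v∈B} e v = ∑_{v∈S} d v
  have pairs : ∀ X Y : Finset V, ∑ v ∈ X, (Y.filter (G.Adj v)).card =
      ((X ×ˢ Y).filter fun p => G.Adj p.1 p.2).card := by
    intro X Y
    rw [Finset.card_filter, Finset.sum_product]
    exact Finset.sum_congr rfl fun v _ => by rw [Finset.card_filter]
  have hsym : ∑ v ∈ B, e v = ∑ v ∈ S, d v := by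
    rw [he, hd, pairs B S, pairs S B]
    apply Finset.card_bij (fun p _ => p.swap)
    · intro p hp
      simp only [Finset.mem_filter, Finset.mem_product] at hp ⊢
      exact ⟨⟨hp.1.2, hp.1.1⟩, hp.2.symm⟩
    · intro p hp q hq hpq
      exact Prod.swap_injective hpq
    · intro p hp
      refine ⟨p.swap, ?_, by simp⟩
      simp only [Finset.mem_filter, Finset.mem_product] at hp ⊢
      exact ⟨⟨hp.1.2, hp.1.1⟩, hp.2.symm⟩
  set T := ∑ v ∈ S, e v with hT
  have hmantel : 2 * T ≤ S.card ^ 2 := mantel_aux G h S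
  have hScard : ρ + S.card = n := by
    have h1 : S.card = n - ρ := Finset.card_compl B
    have h2 : ρ ≤ n := Finset.card_le_univ B
    omega
  -- combine: 2m ≤ ρ + 2 * S.card + T
  have hsplit : 2 * m = (∑ v ∈ B, d v + ∑ v ∈ B, e v) + (∑ v ∈ S, d v + ∑ v ∈ S, e v) := by
    rw [← h2m, Finset.sum_add_distrib, Finset.sum_add_distrib]
  have hmain : 2 * m ≤ ρ + 2 * S.card + T := by
    rw [hT, hsplit, hsym]
    omega
  have hfinal : 4 * m ≤ 2 * ρ + 4 * S.card + S.card ^ 2 := by omega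
  -- now pass to the reals
  rw [hρeq]
  have hns : (n : ℝ) = (ρ : ℝ) + (S.card : ℝ) := by exact_mod_cast hScard.symm
  have h4 : ((4 * m : ℕ) : ℝ) ≤ ((2 * ρ + 4 * S.card + S.card ^ 2 : ℕ) : ℝ) :=
    Nat.cast_le.2 hfinal
  push_cast at h4
  have hkey : (4 : ℝ) * m - 2 * n + 1 ≤ ((S.card : ℝ) + 1) ^ 2 := by nlinarith [h4, hns]
  have hsqrt : Real.sqrt (4 * m - 2 * n + 1) ≤ (S.card : ℝ) + 1 := by
    have h0 : (0 : ℝ) ≤ (S.card : ℝ) + 1 := by positivity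
    calc Real.sqrt (4 * m - 2 * n + 1) ≤ Real.sqrt (((S.card : ℝ) + 1) ^ 2) :=
          Real.sqrt_le_sqrt hkey
      _ = (S.card : ℝ) + 1 := Real.sqrt_sq h0
  linarith [hsqrt, hns]
end

section
/- If G is a triangle-free graph of order n and size m with no isolated vertex, then the packing number of G satisfies ρ(G) ≤ n + 2 − 2·sqrt(1 + m). -/
open SimpleGraph

open Finset in
/-- Mantel's theorem: a triangle-free graph on `n` vertices has at most `n^2/4` edges. -/
lemma mantel_aux_s2 {W : Type*} [Fintype W] (H : SimpleGraph W) [DecidableRel H.Adj]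
    (h3 : H.CliqueFree 3) :
    4 * #H.edgeFinset ≤ Fintype.card W ^ 2 := by
  classical
  set n := Fintype.card W with hn
  set m := #H.edgeFinset with hm
  have hdeg : ∀ v u, H.Adj v u → H.degree v + H.degree u ≤ n := by
    intro v u hvu
    have hdisj : Disjoint (H.neighborFinset v) (H.neighborFinset u) := by
      rw [Finset.disjoint_left]
      intro w hwv hwu
      rw [SimpleGraph.mem_neighborFinset] at hwv hwu
      exact h3 {v, u, w} (SimpleGraph.is3Clique_triple_iff.mpr ⟨hvu, hwv, hwu⟩)
    calc H.degree v + H.degree u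
        = #(H.neighborFinset v ∪ H.neighborFinset u) := by
          rw [Finset.card_union_of_disjoint hdisj]
          simp [SimpleGraph.card_neighborFinset_eq_degree]
      _ ≤ n := Finset.card_le_univ _
  have hconst : ∀ (v : W) (c : ℕ), (∑ u : W, if H.Adj v u then c else 0) = H.degree v * c := by
    intro v c
    rw [← Finset.sum_filter, Finset.sum_const, ← SimpleGraph.neighborFinset_eq_filter,
      SimpleGraph.card_neighborFinset_eq_degree, smul_eq_mul]
  have hswap : (∑ v : W, ∑ u : W, if H.Adj v u then H.degree u else 0)
      = ∑ v : W, H.degree v * H.degree v := by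
    rw [Finset.sum_comm]
    refine Finset.sum_congr rfl fun u _ => ?_
    calc (∑ v : W, if H.Adj v u then H.degree u else 0)
        = ∑ v : W, if H.Adj u v then H.degree u else 0 := by
          refine Finset.sum_congr rfl fun v _ => ?_
          by_cases h' : H.Adj v u
          · rw [if_pos h', if_pos h'.symm]
          · rw [if_neg h', if_neg fun hc => h' hc.symm]
      _ = H.degree u * H.degree u := hconst u _
  have key : (2 : ℕ) * ∑ v : W, H.degree v * H.degree v ≤ 2 * (m * n) := by
    calc (2 : ℕ) * ∑ v : W, H.degree v * H.degree v
        = (∑ v : W, ∑ u : W, if H.Adj v u then H.degree v else 0)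
          + ∑ v : W, ∑ u : W, if H.Adj v u then H.degree u else 0 := by
          rw [hswap]
          rw [Finset.sum_congr rfl fun v (_ : v ∈ univ) => hconst v (H.degree v)]
          ring
      _ = ∑ v : W, ∑ u : W, if H.Adj v u then H.degree v + H.degree u else 0 := by
          rw [← Finset.sum_add_distrib]
          refine Finset.sum_congr rfl fun v _ => ?_
          rw [← Finset.sum_add_distrib]
          refine Finset.sum_congr rfl fun u _ => by split <;> simp
      _ ≤ ∑ v : W, ∑ u : W, if H.Adj v u then n else 0 := by
          refine Finset.sum_le_sum fun v _ => Finset.sum_le_sum fun u _ => ?_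
          split
          · exact hdeg v u (by assumption)
          · exact le_refl 0
      _ = ∑ v : W, H.degree v * n := Finset.sum_congr rfl fun v _ => hconst v n
      _ = (∑ v : W, H.degree v) * n := by rw [Finset.sum_mul]
      _ = 2 * m * n := by rw [SimpleGraph.sum_degrees_eq_twice_card_edges]
      _ = 2 * (m * n) := by ring
  have key2 : ∑ v : W, H.degree v * H.degree v ≤ m * n := Nat.le_of_mul_le_mul_left key (by norm_num)
  have cs : (∑ v : W, H.degree v) ^ 2 ≤ n * ∑ v : W, H.degree v ^ 2 := by
    have := sq_sum_le_card_mul_sum_sq (s := (univ : Finset W)) (f := fun v => (H.degree v : ℕ))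
    rwa [Finset.card_univ, ← hn] at this
  have hsq : (2 * m) ^ 2 ≤ n * (m * n) := by
    calc (2 * m) ^ 2 = (∑ v : W, H.degree v) ^ 2 := by
          rw [SimpleGraph.sum_degrees_eq_twice_card_edges]
      _ ≤ n * ∑ v : W, H.degree v ^ 2 := cs
      _ = n * ∑ v : W, H.degree v * H.degree v := by
          simp [pow_two]
      _ ≤ n * (m * n) := Nat.mul_le_mul_left n key2
  rcases Nat.eq_zero_or_pos m with hm0 | hm0
  · simp [hm0]
  · have : m * (4 * m) ≤ m * n ^ 2 := by
      calc m * (4 * m) = (2 * m) ^ 2 := by ring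
        _ ≤ n * (m * n) := hsq
        _ = m * n ^ 2 := by ring
    exact Nat.le_of_mul_le_mul_left this hm0

theorem stmt_2 {V : Type*} [Fintype V] (G : SimpleGraph V) [DecidableRel G.Adj]
    (h : G.CliqueFree 3) (hiso : ∀ v, 0 < G.degree v) :
    (G.packingNumber : ℝ) ≤ Fintype.card V + 2 -
      2 * Real.sqrt (1 + G.edgeFinset.card) := by
  classical
  set S := {k | ∃ B : Finset V, G.IsPacking B ∧ B.card = k} with hS
  have hne : S.Nonempty := ⟨0, ∅, fun u hu => by simp at hu, rfl⟩
  have hbdd : BddAbove S := by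
    refine ⟨Fintype.card V, ?_⟩
    rintro k ⟨B, -, rfl⟩
    simpa using B.card_le_univ
  obtain ⟨B, hB, hcard⟩ := Nat.sSup_mem hne hbdd
  have hpn : G.packingNumber = B.card := by
    rw [SimpleGraph.packingNumber, ← hS, hcard]
  rw [hpn]
  set n := Fintype.card V with hn
  set m := G.edgeFinset.card with hmdef
  set k := B.card with hk
  set s := ∑ v ∈ B, G.degree v with hs
  -- Step A : k + s ≤ n
  have hA : k + s ≤ n := by
    have hdisj : ∀ u ∈ B, ∀ w ∈ B, u ≠ w →
        Disjoint (insert u (G.neighborFinset u)) (insert w (G.neighborFinset w)) := by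
      intro u hu w hw huw
      rw [← Finset.disjoint_coe]
      simpa [SimpleGraph.neighborFinset_def, Set.coe_toFinset] using hB u hu w hw huw
    calc k + s = ∑ v ∈ B, (1 + G.degree v) := by
          rw [Finset.sum_add_distrib, Finset.sum_const, smul_eq_mul, mul_one]
      _ = ∑ v ∈ B, (insert v (G.neighborFinset v)).card := by
          refine Finset.sum_congr rfl fun v _ => ?_
          rw [Finset.card_insert_of_notMem (by simp), SimpleGraph.card_neighborFinset_eq_degree]
          ring
      _ = (B.biUnion fun v => insert v (G.neighborFinset v)).card :=
          (Finset.card_biUnion hdisj).symm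
      _ ≤ n := Finset.card_le_univ _
  -- Step C : m = m₁ + m₂ with m₁ ≤ s
  set p : Sym2 V → Prop := fun e => ∀ v ∈ e, v ∉ B with hp
  set m₂ := (G.edgeFinset.filter p).card with hm₂
  have hsplit : m₂ + (G.edgeFinset.filter fun e => ¬ p e).card = m :=
    Finset.card_filter_add_card_filter_not _
  have hm₁ : (G.edgeFinset.filter fun e => ¬ p e).card ≤ s := by
    have hsub : (G.edgeFinset.filter fun e => ¬ p e) ⊆
        B.biUnion fun v => G.incidenceFinset v := by
      intro e he
      rw [Finset.mem_filter] at he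
      obtain ⟨heE, hpe⟩ := he
      have hpe' : ∃ v ∈ e, v ∈ B := by
        by_contra hc
        push_neg at hc
        exact hpe hc
      obtain ⟨v, hve, hvB⟩ := hpe'
      refine Finset.mem_biUnion.mpr ⟨v, hvB, ?_⟩
      rw [SimpleGraph.mem_incidenceFinset]
      exact ⟨SimpleGraph.mem_edgeFinset.mp heE, hve⟩
    calc (G.edgeFinset.filter fun e => ¬ p e).card
        ≤ (B.biUnion fun v => G.incidenceFinset v).card := Finset.card_le_card hsub
      _ ≤ ∑ v ∈ B, (G.incidenceFinset v).card := Finset.card_biUnion_le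
      _ = s := Finset.sum_congr rfl fun v _ =>
          SimpleGraph.card_incidenceFinset_eq_degree G v
  -- Step D : 4 * m₂ ≤ (n - k)^2 via Mantel on the induced subgraph.
  have hD : 4 * m₂ ≤ (Bᶜ : Finset V).card ^ 2 := by
    set H := G.induce ((Bᶜ : Finset V) : Set V) with hH
    have hHcf : H.CliqueFree 3 := h.comap (SimpleGraph.Embedding.induce _).isContained
    have hcardW : Fintype.card ((Bᶜ : Finset V) : Set V) = (Bᶜ : Finset V).card := by
      simp only [Finset.coe_sort_coe, Fintype.card_coe]
    have hsub : G.edgeFinset.filter p ⊆ H.edgeFinset.image (Sym2.map Subtype.val) := by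
      intro e he
      rw [Finset.mem_filter] at he
      obtain ⟨heE, hpe⟩ := he
      induction e with
      | _ a b =>
        have hadj : G.Adj a b := SimpleGraph.mem_edgeFinset.mp heE
        have ha : a ∈ ((Bᶜ : Finset V) : Set V) := by
          simpa using hpe a (Sym2.mem_mk_left a b)
        have hb : b ∈ ((Bᶜ : Finset V) : Set V) := by
          simpa using hpe b (Sym2.mem_mk_right a b)
        refine Finset.mem_image.mpr ⟨s(⟨a, ha⟩, ⟨b, hb⟩), ?_, rfl⟩
        rw [SimpleGraph.mem_edgeFinset]
        exact hadj
    calc 4 * m₂ ≤ 4 * (H.edgeFinset.image (Sym2.map Subtype.val)).card :=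
          Nat.mul_le_mul_left 4 (Finset.card_le_card hsub)
      _ ≤ 4 * H.edgeFinset.card := Nat.mul_le_mul_left 4 Finset.card_image_le
      _ ≤ Fintype.card ((Bᶜ : Finset V) : Set V) ^ 2 := mantel_aux_s2 H hHcf
      _ = (Bᶜ : Finset V).card ^ 2 := by rw [hcardW]
  have hcompl : (Bᶜ : Finset V).card = n - k := Finset.card_compl B
  have hkn : k ≤ n := by simpa using B.card_le_univ
  -- Pass to the reals.
  have hAr : (k : ℝ) + s ≤ n := by exact_mod_cast hA
  have hmr : (m : ℝ) ≤ m₂ + s := by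
    have : m ≤ m₂ + s := by omega
    exact_mod_cast this
  have hDr : 4 * (m₂ : ℝ) ≤ ((n : ℝ) - k) ^ 2 := by
    have h1 : (((Bᶜ : Finset V).card : ℝ)) = (n : ℝ) - k := by
      rw [hcompl]
      exact Nat.cast_sub hkn
    calc 4 * (m₂ : ℝ) ≤ (((Bᶜ : Finset V).card : ℝ)) ^ 2 := by exact_mod_cast hD
      _ = ((n : ℝ) - k) ^ 2 := by rw [h1]
  have hs0 : (0 : ℝ) ≤ s := by positivity
  have hm₂0 : (0 : ℝ) ≤ m₂ := by positivity
  have hknr : (k : ℝ) ≤ n := by exact_mod_cast hkn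
  have hsqrt : Real.sqrt (1 + m) ≤ ((n : ℝ) - k + 2) / 2 := by
    have hineq : (1 : ℝ) + m ≤ (((n : ℝ) - k + 2) / 2) ^ 2 := by nlinarith
    calc Real.sqrt (1 + m) ≤ Real.sqrt ((((n : ℝ) - k + 2) / 2) ^ 2) :=
          Real.sqrt_le_sqrt hineq
      _ = ((n : ℝ) - k + 2) / 2 := Real.sqrt_sq (by linarith)
  linarith
end

section
/- For any connected graph G, the 2-limited packing number satisfies L_2(G) ≥ ⌈(2·diam(G) + 2)/3⌉. -/
open SimpleGraph

def SimpleGraph.IsTwoLimitedPacking {V : Type*} [DecidableEq V] [Fintype V]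
    (G : SimpleGraph V) [DecidableRel G.Adj] (B : Finset V) : Prop :=
  ∀ v : V, ((insert v (G.neighborFinset v)) ∩ B).card ≤ 2

noncomputable def SimpleGraph.twoLimitedPackingNumber {V : Type*} [DecidableEq V]
    [Fintype V] (G : SimpleGraph V) [DecidableRel G.Adj] : ℕ :=
  sSup {k | ∃ B : Finset V, G.IsTwoLimitedPacking B ∧ B.card = k}


lemma dist_getVert_le {V : Type*} {G : SimpleGraph V} (hc : G.Connected) {u v : V}
    (p : G.Walk u v) (i k : ℕ) : G.dist (p.getVert i) (p.getVert (i + k)) ≤ k := by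
  induction k with
  | zero => simp
  | succ n ih =>
    by_cases h : i + n < p.length
    · have hadj := p.adj_getVert_succ h
      have h1 : G.dist (p.getVert (i+n)) (p.getVert (i+n+1)) ≤ 1 :=
        SimpleGraph.dist_le hadj.toWalk
      have h2 := hc.dist_triangle (u := p.getVert i) (v := p.getVert (i+n))
        (w := p.getVert (i+n+1))
      have : i + (n+1) = i + n + 1 := by omega
      rw [this]
      omega
    · have h1 : p.getVert (i + n) = v := p.getVert_of_length_le (by omega)
      have h2 : p.getVert (i + (n+1)) = v := p.getVert_of_length_le (by omega)
      rw [h2]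
      rw [h1] at ih
      omega

lemma dist_getVert_ge {V : Type*} {G : SimpleGraph V} (hc : G.Connected) {u v : V}
    (p : G.Walk u v) (hp : p.length = G.dist u v) {i j : ℕ} (hij : i ≤ j)
    (hj : j ≤ p.length) : j - i ≤ G.dist (p.getVert i) (p.getVert j) := by
  have h1 : G.dist u (p.getVert i) ≤ i := by
    have := dist_getVert_le hc p 0 i
    simpa using this
  have h2 : G.dist (p.getVert j) v ≤ p.length - j := by
    have := dist_getVert_le hc p j (p.length - j)
    rwa [show j + (p.length - j) = p.length by omega, p.getVert_length] at this
  have h3 := hc.dist_triangle (u := u) (v := p.getVert i) (w := p.getVert j)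
  have h4 := hc.dist_triangle (u := u) (v := p.getVert j) (w := v)
  omega

lemma filter_mod3_card (n : ℕ) :
    ((Finset.range n).filter (fun i => ¬ i % 3 = 2)).card = n - n / 3 := by
  induction n with
  | zero => simp
  | succ m ih =>
    rw [Finset.range_add_one, Finset.filter_insert]
    by_cases h : ¬ m % 3 = 2
    · rw [if_pos h, Finset.card_insert_of_notMem (by simp), ih]
      omega
    · rw [if_neg h, ih]
      omega

theorem stmt_7_aux {V : Type*} [DecidableEq V] [Fintype V] [Nonempty V]
    (G : SimpleGraph V) [DecidableRel G.Adj] (hc : G.Connected) :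
    (2 * G.diam + 2 + 2) / 3 ≤ sSup {k | ∃ B : Finset V,
      (∀ v : V, ((insert v (G.neighborFinset v)) ∩ B).card ≤ 2) ∧ B.card = k} := by
  classical
  obtain ⟨u, v, huv⟩ := G.exists_dist_eq_diam
  obtain ⟨p, hp⟩ := hc.exists_walk_length_eq_dist u v
  set d := G.diam with hd
  have hlen : p.length = d := by rw [hp, huv]
  have hplen : p.length = G.dist u v := hp
  -- injectivity on range (d+1)
  have hinj : ∀ a ∈ Finset.range (d+1), ∀ b ∈ Finset.range (d+1),
      p.getVert a = p.getVert b → a = b := by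
    have key : ∀ a b : ℕ, a ≤ b → b ≤ p.length → p.getVert a = p.getVert b → a = b := by
      intro a b hab hb heq
      have := dist_getVert_ge hc p hplen hab hb
      rw [heq, SimpleGraph.dist_self] at this
      omega
    intro a ha b hb heq
    rw [Finset.mem_range] at ha hb
    rcases le_total a b with h | h
    · exact key a b h (by omega) heq
    · exact (key b a h (by omega) heq.symm).symm
  set S := (Finset.range (d+1)).filter (fun i => ¬ i % 3 = 2) with hS
  set B := S.image p.getVert with hBdef
  have hSsub : S ⊆ Finset.range (d+1) := Finset.filter_subset _ _
  -- packing property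
  have hB : ∀ w : V, ((insert w (G.neighborFinset w)) ∩ B).card ≤ 2 := by
    intro w
    set N := insert w (G.neighborFinset w) with hN
    set T := S.filter (fun i => p.getVert i ∈ N) with hT
    have himg : N ∩ B ⊆ T.image p.getVert := by
      intro x hx
      rw [Finset.mem_inter] at hx
      obtain ⟨hxN, hxB⟩ := hx
      rw [hBdef, Finset.mem_image] at hxB
      obtain ⟨i, hiS, hix⟩ := hxB
      exact Finset.mem_image.mpr ⟨i, Finset.mem_filter.mpr ⟨hiS, hix ▸ hxN⟩, hix⟩
    refine le_trans (Finset.card_le_card himg) (le_trans Finset.card_image_le ?_)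
    by_contra hcon
    push_neg at hcon
    obtain ⟨a, b, c, ha, hb, hcm, hab, hac, hbc⟩ := Finset.two_lt_card_iff.mp hcon
    have hdistw : ∀ x ∈ T, G.dist w (p.getVert x) ≤ 1 := by
      intro x hx
      have hxN : p.getVert x ∈ N := (Finset.mem_filter.mp hx).2
      rw [hN, Finset.mem_insert] at hxN
      rcases hxN with h | h
      · rw [← h, SimpleGraph.dist_self]; omega
      · rw [SimpleGraph.mem_neighborFinset] at h
        exact SimpleGraph.dist_le h.toWalk
    have key : ∀ x ∈ T, ∀ y ∈ T, x ≤ y → y - x ≤ 2 := by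
      intro x hx y hy hxy
      have hy' : y ≤ p.length := by
        have := hSsub (Finset.mem_filter.mp hy).1
        rw [Finset.mem_range] at this; omega
      have h1 := dist_getVert_ge hc p hplen hxy hy'
      have h2 := hc.dist_triangle (u := p.getVert x) (v := w) (w := p.getVert y)
      have h3 := hdistw x hx
      have h4 := hdistw y hy
      rw [SimpleGraph.dist_comm (u := w)] at h3
      omega
    have hma : a % 3 ≠ 2 := by
      have := (Finset.mem_filter.mp ((Finset.mem_filter.mp ha).1)).2; simpa using this
    have hmb : b % 3 ≠ 2 := by
      have := (Finset.mem_filter.mp ((Finset.mem_filter.mp hb).1)).2; simpa using this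
    have hmc : c % 3 ≠ 2 := by
      have := (Finset.mem_filter.mp ((Finset.mem_filter.mp hcm).1)).2; simpa using this
    have p1 : b - a ≤ 2 ∧ a - b ≤ 2 := by
      rcases le_total a b with h | h
      · exact ⟨key a ha b hb h, by omega⟩
      · exact ⟨by omega, key b hb a ha h⟩
    have p2 : c - a ≤ 2 ∧ a - c ≤ 2 := by
      rcases le_total a c with h | h
      · exact ⟨key a ha c hcm h, by omega⟩
      · exact ⟨by omega, key c hcm a ha h⟩
    have p3 : c - b ≤ 2 ∧ b - c ≤ 2 := by
      rcases le_total b c with h | h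
      · exact ⟨key b hb c hcm h, by omega⟩
      · exact ⟨by omega, key c hcm b hb h⟩
    omega
  -- cardinality of B
  have hcardB : B.card = (d+1) - (d+1)/3 := by
    rw [hBdef, Finset.card_image_of_injOn, hS, filter_mod3_card]
    intro a ha b hb heq
    exact hinj a (hSsub ha) b (hSsub hb) heq
  have hbdd : BddAbove {k | ∃ B : Finset V,
      (∀ v : V, ((insert v (G.neighborFinset v)) ∩ B).card ≤ 2) ∧ B.card = k} := by
    refine ⟨Fintype.card V, ?_⟩
    rintro k ⟨B', _, rfl⟩
    exact Finset.card_le_univ B'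
  have hmem : B.card ∈ {k | ∃ B : Finset V,
      (∀ v : V, ((insert v (G.neighborFinset v)) ∩ B).card ≤ 2) ∧ B.card = k} :=
    ⟨B, hB, rfl⟩
  calc (2 * d + 2 + 2) / 3 ≤ B.card := by rw [hcardB]; omega
    _ ≤ _ := le_csSup hbdd hmem

theorem stmt_7 {V : Type*} [DecidableEq V] [Fintype V] [Nonempty V]
    (G : SimpleGraph V) [DecidableRel G.Adj] (hc : G.Connected) :
    (2 * G.diam + 2 + 2) / 3 ≤ G.twoLimitedPackingNumber := by
  simp only [SimpleGraph.twoLimitedPackingNumber, SimpleGraph.IsTwoLimitedPacking]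
  exact stmt_7_aux G hc
end

section
/- If G and its complement are both connected and diam(G) = diam(complement of G) = 3, then ρ(G) = ρ(complement of G) = 2, and hence ρ(G) + ρ(complement of G) = 4 and ρ(G)·ρ(complement of G) = 4. -/
open SimpleGraph

/-- membership unfolding for closed neighborhoods disjointness -/
lemma notMem_closed {V : Type*} (G : SimpleGraph V) {u w x : V}
    (h : Disjoint (insert u (G.neighborSet u)) (insert w (G.neighborSet w)))
    (hx : x = u ∨ G.Adj u x) : ¬(x = w ∨ G.Adj w x) := by
  intro hx'
  have h1 : x ∈ insert u (G.neighborSet u) := by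
    rcases hx with h | h
    · exact h ▸ Set.mem_insert _ _
    · exact Set.mem_insert_of_mem _ h
  have h2 : x ∈ insert w (G.neighborSet w) := by
    rcases hx' with h | h
    · exact h ▸ Set.mem_insert _ _
    · exact Set.mem_insert_of_mem _ h
  exact Set.disjoint_left.mp h h1 h2

/-- A packing of size ≥ 3 in G forces the complement to have diameter ≤ 2. -/
lemma packing_three_diam {V : Type*} (G : SimpleGraph V) {B : Finset V}
    (hB : G.IsPacking B) (h3 : 2 < B.card) : Gᶜ.ediam ≤ 2 := by
  obtain ⟨a, ha, b, hb, c, hcB, hab, hac, hbc⟩ := Finset.two_lt_card.mp h3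
  apply SimpleGraph.ediam_le_of_edist_le
  intro x y
  -- find z ∈ {a,b,c} with x ∉ N[z] and y ∉ N[z]
  have hx : ∀ z w : V, z ∈ B → w ∈ B → z ≠ w →
      (x = z ∨ G.Adj z x) → ¬(x = w ∨ G.Adj w x) := fun z w hz hw hzw h =>
    notMem_closed G (hB z hz w hw hzw) h
  have hy : ∀ z w : V, z ∈ B → w ∈ B → z ≠ w →
      (y = z ∨ G.Adj z y) → ¬(y = w ∨ G.Adj w y) := fun z w hz hw hzw h =>
    notMem_closed G (hB z hz w hw hzw) h
  have key : ∃ z, z ∈ B ∧ ¬(x = z ∨ G.Adj z x) ∧ ¬(y = z ∨ G.Adj z y) := by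
    by_cases Pa : (x = a ∨ G.Adj a x) ∨ (y = a ∨ G.Adj a y)
    · by_cases Pb : (x = b ∨ G.Adj b x) ∨ (y = b ∨ G.Adj b y)
      · refine ⟨c, hcB, ?_, ?_⟩
        · rcases Pa with pa | pa
          · exact hx a c ha hcB hac pa
          · rcases Pb with pb | pb
            · exact hx b c hb hcB hbc pb
            · exact absurd pb (hy a b ha hb hab pa)
        · rcases Pa with pa | pa
          · rcases Pb with pb | pb
            · exact absurd pb (hx a b ha hb hab pa)
            · exact hy b c hb hcB hbc pb
          · exact hy a c ha hcB hac pa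
      · push_neg at Pb
        exact ⟨b, hb, not_or.mpr Pb.1, not_or.mpr Pb.2⟩
    · push_neg at Pa
      exact ⟨a, ha, not_or.mpr Pa.1, not_or.mpr Pa.2⟩
  obtain ⟨z, _, hxz, hyz⟩ := key
  push_neg at hxz hyz
  have hadj1 : Gᶜ.Adj x z := ⟨hxz.1, fun h => hxz.2 h.symm⟩
  have hadj2 : Gᶜ.Adj z y := ⟨fun h => hyz.1 h.symm, fun h => hyz.2 h⟩
  calc Gᶜ.edist x y ≤ (hadj1.toWalk.append hadj2.toWalk).length :=
        SimpleGraph.edist_le _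
    _ = 2 := by simp

/-- Two vertices at distance 3 form a packing. -/
lemma dist_three_packing {V : Type*} [DecidableEq V] (G : SimpleGraph V)
    (hc : G.Connected) {u v : V} (h : G.dist u v = 3) :
    G.IsPacking {u, v} := by
  have hne : u ≠ v := by
    intro he; rw [he, SimpleGraph.dist_self] at h; omega
  have hnadj : ¬G.Adj u v := by
    intro ha
    rw [(SimpleGraph.dist_eq_one_iff_adj).mpr ha] at h; omega
  have hnocommon : ∀ x, ¬(G.Adj u x ∧ G.Adj v x) := by
    rintro x ⟨h1, h2⟩
    have := hc.dist_triangle (u := u) (v := x) (w := v)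
    rw [(SimpleGraph.dist_eq_one_iff_adj).mpr h1,
      (SimpleGraph.dist_eq_one_iff_adj).mpr h2.symm, h] at this
    omega
  intro a ha b hb hne'
  simp only [Finset.mem_insert, Finset.mem_singleton] at ha hb
  have main : ∀ p q : V, p = u → q = v →
      Disjoint (insert p (G.neighborSet p)) (insert q (G.neighborSet q)) := by
    rintro p q rfl rfl
    rw [Set.disjoint_left]
    rintro x hx hx'
    simp only [Set.mem_insert_iff, SimpleGraph.mem_neighborSet] at hx hx'
    rcases hx with rfl | hx <;> rcases hx' with h' | h'
    · exact hne h'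
    · exact hnadj h'.symm
    · subst h'; exact hnadj hx
    · exact hnocommon x ⟨hx, h'⟩
  rcases ha with rfl | rfl <;> rcases hb with rfl | rfl
  · exact absurd rfl hne'
  · exact main a b rfl rfl
  · exact (main b a rfl rfl).symm
  · exact absurd rfl hne'

lemma packingNumber_eq_two {V : Type*} [Fintype V] (G : SimpleGraph V)
    (hc : G.Connected) (hd : G.diam = 3) (hd' : Gᶜ.diam = 3) :
    G.packingNumber = 2 := by
  classical
  have hne : Nonempty V := hc.nonempty
  obtain ⟨u, v, huv⟩ := SimpleGraph.exists_dist_eq_diam (G := G)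
  rw [hd] at huv
  have hP := dist_three_packing G hc huv
  have huv' : u ≠ v := by
    intro he; rw [he, SimpleGraph.dist_self] at huv; omega
  have hmem : 2 ∈ {k | ∃ B : Finset V, G.IsPacking B ∧ B.card = k} :=
    ⟨{u, v}, hP, by rw [Finset.card_insert_of_notMem (by simpa using huv'),
      Finset.card_singleton]⟩
  have hub : ∀ k ∈ {k | ∃ B : Finset V, G.IsPacking B ∧ B.card = k}, k ≤ 2 := by
    rintro k ⟨B, hB, rfl⟩
    by_contra hk
    push_neg at hk
    have := packing_three_diam G hB hk
    have : Gᶜ.diam ≤ 2 := by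
      have := ENat.toNat_le_toNat this (by simp)
      simpa [SimpleGraph.diam] using this
    omega
  exact le_antisymm (csSup_le ⟨2, hmem⟩ hub) (le_csSup ⟨2, hub⟩ hmem)

theorem stmt_9 {V : Type*} [Fintype V] (G : SimpleGraph V)
    (hc : G.Connected) (hc' : Gᶜ.Connected)
    (hd : G.diam = 3) (hd' : Gᶜ.diam = 3) :
    G.packingNumber = 2 ∧ Gᶜ.packingNumber = 2 ∧
      G.packingNumber + Gᶜ.packingNumber = 4 ∧
      G.packingNumber * Gᶜ.packingNumber = 4 := by
  have h1 := packingNumber_eq_two G hc hd hd'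
  have h2 := packingNumber_eq_two Gᶜ hc' hd' (by rwa [compl_compl])
  exact ⟨h1, h2, by omega, by rw [h1, h2]⟩
end

section
/- If G and its complement are both connected and u, v are the endpoints of a path of length 3 realizing diam(G) = 3, then {u, v} is a dominating set in the complement of G. -/
open SimpleGraph

theorem stmt_10 {V : Type*} [Fintype V] (G : SimpleGraph V)
    (hc : G.Connected) (hc' : Gᶜ.Connected)
    (hdiam : G.diam = 3) (u v : V) (hdist : G.dist u v = 3) :
    ∀ w : V, w ≠ u → w ≠ v → Gᶜ.Adj w u ∨ Gᶜ.Adj w v := by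
  intro w hwu hwv
  by_contra h
  push_neg at h
  obtain ⟨h1, h2⟩ := h
  rw [compl_adj] at h1 h2
  push_neg at h1 h2
  have a1 : G.Adj u w := (h1 hwu).symm
  have a2 : G.Adj w v := h2 hwv
  have ht : G.dist u v ≤ G.dist u w + G.dist w v := hc.dist_triangle
  rw [hdist, (G.dist_eq_one_iff_adj).mpr a1, (G.dist_eq_one_iff_adj).mpr a2] at ht
  omega
end

section
/- Let G and Ḡ both be connected with diam(G) ≥ 3 and diam(Ḡ) ≤ 2. Then ρ(G) ≤ n − ⌈(2·diam(G) + 3·Δ(G) − 8)/3⌉, where n is the order of G and Δ(G) its maximum degree. -/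
open SimpleGraph

/-- Counting lemma: a set of naturals all `≤ H` whose elements are pairwise
at distance at least 3 has at most `H/3 + 1` elements. -/
private lemma gap3 (A : Finset ℕ) (H : ℕ) (hA : ∀ a ∈ A, a ≤ H)
    (hgap : ∀ a ∈ A, ∀ b ∈ A, a < b → a + 3 ≤ b) : 3 * A.card ≤ H + 3 := by
  have hcard : A.card ≤ (Finset.range (H / 3 + 1)).card := by
    apply Finset.card_le_card_of_injOn (fun a => a / 3)
    · intro a ha
      have := hA a ha
      simp only [Finset.coe_range, Set.mem_Iio, Finset.mem_coe, Finset.mem_range]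
      omega
    · intro a ha b hb hab
      simp only [Finset.mem_coe] at ha hb
      have hab' : a / 3 = b / 3 := hab
      rcases lt_trichotomy a b with h | h | h
      · have := hgap a ha b hb h; omega
      · exact h
      · have := hgap b hb a ha h; omega
  rw [Finset.card_range] at hcard
  omega

/-- Shifted version of `gap3`. -/
private lemma gap3' (A : Finset ℕ) (lo hi : ℕ) (hA : ∀ a ∈ A, lo ≤ a ∧ a ≤ hi)
    (hgap : ∀ a ∈ A, ∀ b ∈ A, a < b → a + 3 ≤ b) (hne : A.Nonempty) :
    3 * A.card + lo ≤ hi + 3 := by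
  obtain ⟨a0, ha0⟩ := hne
  have hlohi : lo ≤ hi := le_trans (hA a0 ha0).1 (hA a0 ha0).2
  have hinj : Set.InjOn (fun a => a - lo) A := by
    intro a ha b hb hab
    simp only [Finset.mem_coe] at ha hb
    have h1 := (hA a ha).1
    have h2 := (hA b hb).1
    simp only at hab
    omega
  have hcard : (A.image (fun a => a - lo)).card = A.card := Finset.card_image_of_injOn hinj
  have := gap3 (A.image (fun a => a - lo)) (hi - lo)
    (by
      intro a ha
      obtain ⟨b, hb, rfl⟩ := Finset.mem_image.mp ha
      have := hA b hb
      omega)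
    (by
      intro a ha b hb hab
      obtain ⟨a', ha', rfl⟩ := Finset.mem_image.mp ha
      obtain ⟨b', hb', rfl⟩ := Finset.mem_image.mp hb
      have h1 := (hA a' ha').1
      have h2 := (hA b' hb').1
      rcases lt_trichotomy a' b' with h | h | h
      · have := hgap a' ha' b' hb' h; omega
      · omega
      · have := hgap b' hb' a' ha' h; omega)
  omega

/-- Window lemma: if additionally the set avoids a window `{i-1, i, i+1}` with
`1 ≤ i` and `i+1 ≤ d`, then `3·|A| ≤ d + 2`. -/
private lemma window (A : Finset ℕ) (d i : ℕ) (h1 : 1 ≤ i) (h2 : i + 1 ≤ d)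
    (hA : ∀ a ∈ A, a ≤ d) (hav : ∀ a ∈ A, a + 1 ≠ i ∧ a ≠ i ∧ a ≠ i + 1)
    (hgap : ∀ a ∈ A, ∀ b ∈ A, a < b → a + 3 ≤ b) : 3 * A.card ≤ d + 2 := by
  classical
  have hsplit := Finset.card_filter_add_card_filter_not (s := A) (p := (· < i))
  set A1 := A.filter (· < i) with hA1def
  set A2 := A.filter (fun a => ¬ a < i) with hA2def
  have hA1mem : ∀ a ∈ A1, a + 2 ≤ i := by
    intro a ha
    have h := Finset.mem_filter.mp ha
    have := hav a h.1
    omega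
  have hA2mem : ∀ a ∈ A2, i + 2 ≤ a ∧ a ≤ d := by
    intro a ha
    have h := Finset.mem_filter.mp ha
    have h3 := hav a h.1
    have h4 := hA a h.1
    have h5 := h.2
    omega
  have hb1 : 3 * A1.card ≤ i + 1 := by
    rcases A1.eq_empty_or_nonempty with h | h
    · simp [h]
    · obtain ⟨a0, ha0⟩ := h
      have ha0' := hA1mem a0 ha0
      have := gap3' A1 0 (i - 2)
        (fun a ha => ⟨Nat.zero_le _, by have := hA1mem a ha; omega⟩)
        (fun a ha b hb hab =>
          hgap a (Finset.mem_filter.mp ha).1 b (Finset.mem_filter.mp hb).1 hab)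
        ⟨a0, ha0⟩
      omega
  have hb2 : 3 * A2.card + i ≤ d + 1 := by
    rcases A2.eq_empty_or_nonempty with h | h
    · simp [h]; omega
    · have := gap3' A2 (i + 2) d hA2mem
        (fun a ha b hb hab =>
          hgap a (Finset.mem_filter.mp ha).1 b (Finset.mem_filter.mp hb).1 hab)
        h
      omega
  omega

/-- Distances along a walk: `dist (getVert i) (getVert j) ≤ j - i`. -/
private lemma dist_getVert_le_s14 {V : Type*} {G : SimpleGraph V} (hc : G.Connected)
    {u w : V} (W : G.Walk u w) (i j : ℕ) (hij : i ≤ j) (hj : j ≤ W.length) :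
    G.dist (W.getVert i) (W.getVert j) ≤ j - i := by
  induction j with
  | zero =>
    have : i = 0 := Nat.le_zero.mp hij
    subst this
    simp
  | succ j ih =>
    rcases Nat.lt_or_ge i (j + 1) with h | h
    · have hij' : i ≤ j := by omega
      have hadj : G.Adj (W.getVert j) (W.getVert (j + 1)) :=
        W.adj_getVert_succ (by omega)
      have h1 := ih hij' (by omega)
      have h2 : G.dist (W.getVert j) (W.getVert (j + 1)) ≤ 1 := by
        have := SimpleGraph.dist_le hadj.toWalk
        simpa using this
      have tri := hc.dist_triangle (u := W.getVert i) (v := W.getVert j)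
        (w := W.getVert (j + 1))
      omega
    · have : i = j + 1 := by omega
      subst this
      simp

open scoped Classical in
theorem stmt_14 {V : Type*} [Fintype V] (G : SimpleGraph V)
    (hc : G.Connected) (hc' : Gᶜ.Connected)
    (hd : 3 ≤ G.diam) (hd' : Gᶜ.diam ≤ 2) :
    (G.packingNumber : ℤ) ≤ (Fintype.card V : ℤ) -
      ⌈((2 * G.diam + 3 * G.maxDegree - 8 : ℤ) : ℚ) / 3⌉ := by
  classical
  have hne : Nonempty V := hc.nonempty
  set n := Fintype.card V with hn
  set d := G.diam with hdd
  set Δ := G.maxDegree with hΔ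
  -- Key combinatorial estimate for any packing B.
  have key : ∀ B : Finset V, G.IsPacking B →
      2 * d + 3 * Δ ≤ 3 * (n - B.card) + 8 := by
    intro B hB
    obtain ⟨u, w, huw⟩ := G.exists_dist_eq_diam
    obtain ⟨W, hW⟩ := hc.exists_walk_length_eq_dist u w
    have hWlen : W.length = d := by rw [hW, huw]
    set x : ℕ → V := fun i => W.getVert i with hx
    have hdistle : ∀ i j : ℕ, i ≤ j → j ≤ d → G.dist (x i) (x j) ≤ j - i := by
      intro i j hij hj
      exact dist_getVert_le_s14 hc W i j hij (by omega)
    have hdist : ∀ i j : ℕ, i ≤ j → j ≤ d → G.dist (x i) (x j) = j - i := by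
      intro i j hij hj
      have t1 : G.dist u (x i) ≤ i := by
        have := hdistle 0 i (Nat.zero_le _) (le_trans hij hj)
        simpa [hx, W.getVert_zero] using this
      have t2 : G.dist (x j) w ≤ d - j := by
        have := hdistle j d hj le_rfl
        have hxd : x d = w := by
          rw [hx]
          simp only
          rw [← hWlen, W.getVert_length]
        rwa [hxd] at this
      have tri1 := hc.dist_triangle (u := u) (v := x i) (w := w)
      have tri2 := hc.dist_triangle (u := x i) (v := x j) (w := w)
      have hle := hdistle i j hij hj
      omega
    have hinjx : ∀ i j : ℕ, i ≤ d → j ≤ d → x i = x j → i = j := by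
      intro i j hi hj hxx
      rcases lt_trichotomy i j with h | h | h
      · have := hdist i j (le_of_lt h) hj
        rw [hxx, SimpleGraph.dist_self] at this
        omega
      · exact h
      · have := hdist j i (le_of_lt h) hi
        rw [hxx, SimpleGraph.dist_self] at this
        omega
    -- packing vertices on the path are at index distance ≥ 3
    have hgapB : ∀ i j : ℕ, j ≤ d → x i ∈ B → x j ∈ B → i < j → i + 3 ≤ j := by
      intro i j hj hxi hxj hij
      by_contra hcon
      have hdij : G.dist (x i) (x j) = j - i := hdist i j (le_of_lt hij) hj
      have hnexy : x i ≠ x j := by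
        intro hxx
        exact absurd (hinjx i j (by omega) hj hxx) (by omega)
      have hdisj := hB (x i) hxi (x j) hxj hnexy
      have : ∃ z, z ∈ insert (x i) (G.neighborSet (x i)) ∧
          z ∈ insert (x j) (G.neighborSet (x j)) := by
        rcases Nat.lt_or_ge (j - i) 2 with h2 | h2
        · -- j = i + 1, adjacent
          have hj' : j = i + 1 := by omega
          refine ⟨x i, Set.mem_insert _ _, ?_⟩
          have hadj : G.Adj (x i) (x (i + 1)) := W.adj_getVert_succ (by omega)
          rw [hj']
          exact Set.mem_insert_iff.mpr (Or.inr hadj.symm)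
        · -- j = i + 2, common neighbor x (i+1)
          have hj' : j = i + 2 := by omega
          refine ⟨x (i + 1), ?_, ?_⟩
          · have hadj : G.Adj (x i) (x (i + 1)) := W.adj_getVert_succ (by omega)
            exact Set.mem_insert_iff.mpr (Or.inr hadj)
          · have hadj : G.Adj (x (i + 1)) (x (i + 2)) := W.adj_getVert_succ (by omega)
            rw [hj']
            exact Set.mem_insert_iff.mpr (Or.inr hadj.symm)
      obtain ⟨z, hz1, hz2⟩ := this
      exact Set.disjoint_left.mp hdisj hz1 hz2
    -- max degree vertex and its closed neighborhood
    obtain ⟨v, hv⟩ := G.exists_maximal_degree_vertex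
    set N : Finset V := insert v (G.neighborFinset v) with hNdef
    have hNcard : N.card = Δ + 1 := by
      rw [hNdef, Finset.card_insert_of_notMem (G.notMem_neighborFinset_self v),
        G.card_neighborFinset_eq_degree, hΔ, hv]
    have hclose : ∀ y ∈ N, v ∈ insert y (G.neighborSet y) := by
      intro y hy
      rcases Finset.mem_insert.mp hy with h | h
      · exact h ▸ Set.mem_insert _ _
      · exact Set.mem_insert_iff.mpr (Or.inr ((G.mem_neighborFinset v y).mp h).symm)
    have hNB : (N ∩ B).card ≤ 1 := by
      apply Finset.card_le_one.mpr
      intro a ha b hb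
      by_contra hab
      have ha' := Finset.mem_inter.mp ha
      have hb' := Finset.mem_inter.mp hb
      have hdisj := hB a ha'.2 b hb'.2 hab
      exact Set.disjoint_left.mp hdisj (hclose a ha'.1) (hclose b hb'.1)
    have hdvN : ∀ y ∈ N, G.dist v y ≤ 1 := by
      intro y hy
      rcases Finset.mem_insert.mp hy with h | h
      · rw [h, SimpleGraph.dist_self]; omega
      · have hadj : G.Adj v y := (G.mem_neighborFinset v y).mp h
        have := SimpleGraph.dist_le hadj.toWalk
        simpa using this
    -- index sets
    set A : Finset ℕ := (Finset.range (d + 1)).filter (fun j => x j ∈ B) with hAdef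
    set C : Finset ℕ := (Finset.range (d + 1)).filter (fun j => x j ∈ N) with hCdef
    have hAle : ∀ a ∈ A, a ≤ d := by
      intro a ha
      have := Finset.mem_filter.mp ha
      have := Finset.mem_range.mp this.1
      omega
    have hAgap : ∀ a ∈ A, ∀ b ∈ A, a < b → a + 3 ≤ b := by
      intro a ha b hb hab
      have ha' := Finset.mem_filter.mp ha
      have hb' := Finset.mem_filter.mp hb
      exact hgapB a b (by have := Finset.mem_range.mp hb'.1; omega) ha'.2 hb'.2 hab
    have hCwin : ∀ j ∈ C, ∀ k ∈ C, j ≤ k → k ≤ j + 2 := by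
      intro j hj k hk hjk
      have hj' := Finset.mem_filter.mp hj
      have hk' := Finset.mem_filter.mp hk
      have hkd : k ≤ d := by have := Finset.mem_range.mp hk'.1; omega
      have hdjk : G.dist (x j) (x k) = k - j := hdist j k hjk hkd
      have t1 := hdvN (x j) hj'.2
      have t2 := hdvN (x k) hk'.2
      have tri := hc.dist_triangle (u := x j) (v := v) (w := x k)
      have hcj : G.dist (x j) v ≤ 1 := by rwa [SimpleGraph.dist_comm] at t1
      omega
    -- master inequality
    have hAcard : 3 * A.card ≤ d + 3 := gap3 A d hAle hAgap
    have hACcard : (C \ A).card + A.card = (A ∪ C).card := by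
      rw [Finset.card_sdiff_add_card, Finset.union_comm]
    have hCsub : ∀ m, m ∈ C → C ⊆ ({m, m + 1, m + 2} : Finset ℕ) → C.card ≤ 3 := by
      intro m _ hsub
      calc C.card ≤ ({m, m + 1, m + 2} : Finset ℕ).card := Finset.card_le_card hsub
        _ ≤ ({m + 1, m + 2} : Finset ℕ).card + 1 := Finset.card_insert_le _ _
        _ ≤ (({m + 2} : Finset ℕ).card + 1) + 1 := by
            have := Finset.card_insert_le (m + 1) ({m + 2} : Finset ℕ)
            omega
        _ ≤ 3 := by simp
    have hmaster : 3 * (A ∪ C).card + 3 * (N ∩ B).card ≤ d + 14 := by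
      rcases C.eq_empty_or_nonempty with hCe | hCne
      · have : (C \ A).card = 0 := by rw [hCe]; simp
        omega
      · have hmmem := C.min'_mem hCne
        set m := C.min' hCne with hm
        have hsub : C ⊆ ({m, m + 1, m + 2} : Finset ℕ) := by
          intro j hj
          have h1 := C.min'_le j hj
          have h2 := hCwin m hmmem j hj h1
          simp only [Finset.mem_insert, Finset.mem_singleton]
          omega
        have hC3 : C.card ≤ 3 := hCsub m hmmem hsub
        have hCA : (C \ A).card ≤ C.card := Finset.card_le_card (Finset.sdiff_subset)
        rcases Finset.eq_empty_or_nonempty (A ∩ C) with hACe | hACne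
        · -- A and C disjoint
          rcases Nat.lt_or_ge C.card 3 with hlt | hge
          · omega
          · -- C = {m, m+1, m+2}, use the window lemma
            have hCeq : C = ({m, m + 1, m + 2} : Finset ℕ) := by
              apply Finset.eq_of_subset_of_card_le hsub
              calc ({m, m + 1, m + 2} : Finset ℕ).card ≤ 3 := by
                    calc ({m, m + 1, m + 2} : Finset ℕ).card
                        ≤ ({m + 1, m + 2} : Finset ℕ).card + 1 := Finset.card_insert_le _ _
                      _ ≤ (({m + 2} : Finset ℕ).card + 1) + 1 := by
                          have := Finset.card_insert_le (m + 1) ({m + 2} : Finset ℕ)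
                          omega
                      _ ≤ 3 := by simp
                _ ≤ C.card := hge
            have hm2d : m + 2 ≤ d := by
              have : m + 2 ∈ C := by rw [hCeq]; simp
              have := Finset.mem_range.mp (Finset.mem_filter.mp this).1
              omega
            have hwin := window A d (m + 1) (by omega) (by omega) hAle
              (by
                intro a ha
                have hnotC : a ∉ C := by
                  intro hmem
                  exact (Finset.notMem_empty a) (hACe ▸ Finset.mem_inter.mpr ⟨ha, hmem⟩)
                rw [hCeq] at hnotC
                simp only [Finset.mem_insert, Finset.mem_singleton, not_or] at hnotC
                omega)
              hAgap
            omega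
        · -- some element of C is in A
          obtain ⟨j, hj⟩ := hACne
          have hj' := Finset.mem_inter.mp hj
          have hssub : C \ A ⊂ C := by
            apply Finset.ssubset_iff_of_subset (Finset.sdiff_subset) |>.mpr
            exact ⟨j, hj'.2, by simp [hj'.1]⟩
          have := Finset.card_lt_card hssub
          omega
    -- build the large set of non-packing vertices
    set AC : Finset ℕ := A ∪ C with hACdef
    have hACsub : AC ⊆ Finset.range (d + 1) := by
      intro a ha
      rcases Finset.mem_union.mp ha with h | h
      · exact (Finset.mem_filter.mp h).1
      · exact (Finset.mem_filter.mp h).1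
    set P0 : Finset V := (Finset.range (d + 1) \ AC).image x with hP0def
    have hP0card : P0.card = (d + 1) - AC.card := by
      rw [hP0def, Finset.card_image_of_injOn, Finset.card_sdiff_of_subset hACsub, Finset.card_range]
      intro a ha b hb hab
      simp only [Finset.coe_sdiff, Set.mem_diff, Finset.mem_coe, Finset.mem_range] at ha hb
      exact hinjx a b (by omega) (by omega) hab
    set S : Finset V := P0 ∪ (N \ B) with hSdef
    have hP0N : ∀ y ∈ P0, y ∉ N ∧ y ∉ B := by
      intro y hy
      obtain ⟨j, hj, rfl⟩ := Finset.mem_image.mp hy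
      have hj' := Finset.mem_sdiff.mp hj
      have hjd := Finset.mem_range.mp hj'.1
      constructor
      · intro hmem
        exact hj'.2 (Finset.mem_union.mpr (Or.inr (Finset.mem_filter.mpr ⟨hj'.1, hmem⟩)))
      · intro hmem
        exact hj'.2 (Finset.mem_union.mpr (Or.inl (Finset.mem_filter.mpr ⟨hj'.1, hmem⟩)))
    have hSdisj : Disjoint P0 (N \ B) := by
      rw [Finset.disjoint_left]
      intro y hy hmem
      exact (hP0N y hy).1 (Finset.mem_sdiff.mp hmem).1
    have hScard : S.card = P0.card + (N \ B).card := Finset.card_union_of_disjoint hSdisj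
    have hNBcard : (N ∩ B).card + (N \ B).card = N.card := Finset.card_inter_add_card_sdiff N B
    have hSB : S ⊆ Bᶜ := by
      intro y hy
      rw [Finset.mem_compl]
      rcases Finset.mem_union.mp hy with h | h
      · exact (hP0N y h).2
      · exact (Finset.mem_sdiff.mp h).2
    have hSle : S.card ≤ n - B.card := by
      have h1 : S.card ≤ Bᶜ.card := Finset.card_le_card hSB
      rwa [Finset.card_compl] at h1
    have hACle : AC.card ≤ d + 1 := by
      have := Finset.card_le_card hACsub
      rwa [Finset.card_range] at this
    have hBn : B.card ≤ n := Finset.card_le_univ B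
    omega
  -- pass to the packing number
  have hSetne : {k | ∃ B : Finset V, G.IsPacking B ∧ B.card = k}.Nonempty := by
    refine ⟨0, ∅, ?_, by simp⟩
    intro a ha
    exact absurd ha (Finset.notMem_empty a)
  have hBdd : BddAbove {k | ∃ B : Finset V, G.IsPacking B ∧ B.card = k} := by
    refine ⟨n, ?_⟩
    rintro k ⟨B, -, rfl⟩
    exact Finset.card_le_univ B
  have hmem := Nat.sSup_mem hSetne hBdd
  obtain ⟨B, hBpack, hBcard⟩ := hmem
  have hkey := key B hBpack
  have hBn : B.card ≤ n := Finset.card_le_univ B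
  have hceil : (⌈((2 * (d : ℤ) + 3 * (Δ : ℤ) - 8 : ℤ) : ℚ) / 3⌉ : ℤ) ≤ (n : ℤ) - B.card := by
    rw [Int.ceil_le]
    rw [div_le_iff₀ (by norm_num : (0:ℚ) < 3)]
    have hcast : ((n : ℚ) - (B.card : ℚ)) = ((n - B.card : ℕ) : ℚ) := by
      rw [Nat.cast_sub hBn]
    push_cast
    rw [hcast]
    have : (2 * d + 3 * Δ : ℚ) ≤ 3 * ((n - B.card : ℕ) : ℚ) + 8 := by
      exact_mod_cast hkey
    linarith
  have hpn : (G.packingNumber : ℤ) = (B.card : ℤ) := by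
    rw [hBcard]; rfl
  rw [hpn]
  push_cast at hceil ⊢
  linarith
end

section
/- Let G and Ḡ both be connected with diam(G) ≠ diam(Ḡ), and set Δ' = min{Δ(G), Δ(Ḡ)} and M = max{diam(G), diam(Ḡ)} ≥ 3. Then ρ(G) + ρ(Ḡ) ≤ n − ⌈(2M + 3Δ' − 11)/3⌉ and ρ(G)·ρ(Ḡ) ≤ n − ⌈(2M + 3Δ' − 8)/3⌉. -/
open SimpleGraph

section Helpers
open Finset

lemma sparse_shift_card {s : Finset ℕ} (h : ∀ i ∈ s, ∀ j ∈ s, i < j → 3 ≤ j - i)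
    {c t : ℕ} (hlo : ∀ i ∈ s, c ≤ i) (hhi : ∀ i ∈ s, i < c + 3 * t) : s.card ≤ t := by
  have h' : s.card ≤ (Finset.range t).card := by
    apply Finset.card_le_card_of_injOn (fun i => (i - c) / 3)
    · intro i hi
      have h1 := hlo i hi; have h2 := hhi i hi
      simp only [Finset.mem_coe, Finset.mem_range]
      omega
    · intro i hi j hj hij
      simp only [Finset.mem_coe] at hi hj
      have hij' : (i - c)/3 = (j - c)/3 := hij
      have h1 := hlo i hi; have h2 := hlo j hj
      by_contra hne
      rcases Nat.lt_or_ge i j with hlt | hge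
      · have := h i hi j hj hlt; omega
      · have hlt : j < i := by omega
        have := h j hj i hi hlt; omega
  simpa using h'

lemma nat_window_le_three {s : Finset ℕ}
    (h : ∀ i ∈ s, ∀ j ∈ s, i ≤ j → j - i ≤ 2) : s.card ≤ 3 := by
  rcases s.eq_empty_or_nonempty with rfl | hs
  · simp
  · have hsub : s ⊆ Finset.Icc (s.min' hs) (s.min' hs + 2) := by
      intro i hi
      rw [Finset.mem_Icc]
      refine ⟨s.min'_le i hi, ?_⟩
      have := h _ (s.min'_mem hs) i hi (s.min'_le i hi)
      omega
    calc s.card ≤ (Finset.Icc (s.min' hs) (s.min' hs + 2)).card := Finset.card_le_card hsub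
      _ ≤ 3 := by rw [Nat.card_Icc]; omega

lemma nat_sparse_card {M : ℕ} {s : Finset ℕ} (hs : s ⊆ Finset.range (M+1))
    (h : ∀ i ∈ s, ∀ j ∈ s, i < j → 3 ≤ j - i) : s.card ≤ M/3 + 1 := by
  apply sparse_shift_card h (c := 0) (fun i _ => Nat.zero_le i)
  intro i hi
  have := hs hi; rw [Finset.mem_range] at this
  omega

lemma nat_sparse_hits {M m : ℕ} {s : Finset ℕ} (hs : s ⊆ Finset.range (M+1))
    (h : ∀ i ∈ s, ∀ j ∈ s, i < j → 3 ≤ j - i) (hM : M % 3 = 0)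
    (hcard : M/3 + 1 ≤ s.card) (hm : m + 2 ≤ M) : ∃ j ∈ s, m ≤ j ∧ j ≤ m + 2 := by
  by_contra hno
  push_neg at hno
  set s1 := s.filter (fun j => j < m) with hs1
  set s2 := s.filter (fun j => m + 3 ≤ j) with hs2
  have hmem1 : ∀ i ∈ s1, i ∈ s ∧ i < m := by
    intro i hi; rw [hs1, Finset.mem_filter] at hi; exact hi
  have hmem2 : ∀ i ∈ s2, i ∈ s ∧ m + 3 ≤ i := by
    intro i hi; rw [hs2, Finset.mem_filter] at hi; exact hi
  have hsplit : s ⊆ s1 ∪ s2 := by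
    intro j hj
    have hj' := hno j hj
    rw [Finset.mem_union, hs1, hs2, Finset.mem_filter, Finset.mem_filter]
    rcases Nat.lt_or_ge j m with h1 | h1
    · exact Or.inl ⟨hj, h1⟩
    · exact Or.inr ⟨hj, by omega⟩
  have hc1 : s1.card ≤ (m+2)/3 := by
    refine sparse_shift_card (c := 0) ?_ (fun i _ => Nat.zero_le i) ?_
    · intro i hi j hj hij
      exact h i (hmem1 i hi).1 j (hmem1 j hj).1 hij
    · intro i hi
      have := (hmem1 i hi).2
      omega
  have hc2 : s2.card ≤ (M - m)/3 := by
    refine sparse_shift_card (c := m + 3) ?_ (fun i hi => (hmem2 i hi).2) ?_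
    · intro i hi j hj hij
      exact h i (hmem2 i hi).1 j (hmem2 j hj).1 hij
    · intro i hi
      have h1 := (hmem2 i hi).2
      have h2 := hs (hmem2 i hi).1
      rw [Finset.mem_range] at h2
      omega
  have hc := Finset.card_le_card hsplit
  have hcu := Finset.card_union_le s1 s2
  omega

variable {V : Type*}

variable {V : Type*}

lemma ediam_ne_top_of_connected [Fintype V] {G : SimpleGraph V} (hc : G.Connected) :
    G.ediam ≠ ⊤ := by
  have : Nonempty V := hc.nonempty
  obtain ⟨u, v, huv⟩ := SimpleGraph.exists_edist_eq_ediam_of_finite (G := G)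
  rw [← huv]
  exact SimpleGraph.edist_ne_top_iff_reachable.mpr (hc u v)

lemma common_of_dist_le_two {G : SimpleGraph V} {u w : V} (hr : G.Reachable u w)
    (h2 : G.dist u w ≤ 2) :
    ¬ Disjoint (insert u (G.neighborSet u)) (insert w (G.neighborSet w)) := by
  intro hd
  rw [Set.disjoint_left] at hd
  obtain ⟨p, hp⟩ := hr.exists_walk_length_eq_dist
  have h0 : G.dist u w = 0 ∨ G.dist u w = 1 ∨ G.dist u w = 2 := by omega
  rcases h0 with h | h | h
  · have huw : u = w := (hr.dist_eq_zero_iff).mp h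
    subst huw
    exact hd (Set.mem_insert u _) (Set.mem_insert u _)
  · have hadj : G.Adj u w := SimpleGraph.dist_eq_one_iff_adj.mp h
    exact hd (Set.mem_insert_of_mem _ hadj) (Set.mem_insert w _)
  · rw [h] at hp
    have ha1 : G.Adj u (p.getVert 1) := by
      have := p.adj_getVert_succ (i := 0) (by omega)
      simpa using this
    have ha2 : G.Adj (p.getVert 1) w := by
      have h2' := p.adj_getVert_succ (i := 1) (by omega)
      have h3' : p.getVert 2 = w := by
        have := p.getVert_length
        rw [hp] at this
        exact this
      rwa [h3'] at h2'
    exact hd (Set.mem_insert_of_mem _ ha1) (Set.mem_insert_of_mem _ ha2.symm)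

lemma compl_dist_le_three {G : SimpleGraph V} (hc' : Gᶜ.Connected) {u w : V}
    (h3 : 3 ≤ G.dist u w) (x y : V) : Gᶜ.dist x y ≤ 3 := by
  have hne : u ≠ w := by
    rintro rfl; rw [SimpleGraph.dist_self] at h3; omega
  have hnadj : ¬ G.Adj u w := by
    intro h
    have : G.dist u w = 1 := SimpleGraph.dist_eq_one_iff_adj.mpr h
    omega
  have hmid : ∀ z, G.Adj u z → ¬ G.Adj z w := by
    intro z h1 h2
    have : G.dist u w ≤ 2 := by
      have := SimpleGraph.dist_le (SimpleGraph.Walk.cons h1 (SimpleGraph.Walk.cons h2 SimpleGraph.Walk.nil))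
      simpa using this
    omega
  have key : ∀ z, Gᶜ.dist z u ≤ 1 ∨ Gᶜ.dist z w ≤ 1 := by
    intro z
    by_cases hz1 : z = u
    · left; rw [hz1, SimpleGraph.dist_self]; omega
    by_cases hz2 : z = w
    · right; rw [hz2, SimpleGraph.dist_self]; omega
    by_cases ha : G.Adj u z
    · right
      have hzw : Gᶜ.Adj z w := by
        rw [SimpleGraph.compl_adj]
        exact ⟨hz2, hmid z ha⟩
      exact (SimpleGraph.dist_eq_one_iff_adj.mpr hzw).le
    · left
      have hzu : Gᶜ.Adj z u := by
        rw [SimpleGraph.compl_adj]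
        exact ⟨hz1, fun h => ha h.symm⟩
      exact (SimpleGraph.dist_eq_one_iff_adj.mpr hzu).le
  have huw : Gᶜ.dist u w ≤ 1 := by
    have : Gᶜ.Adj u w := by rw [SimpleGraph.compl_adj]; exact ⟨hne, hnadj⟩
    exact (SimpleGraph.dist_eq_one_iff_adj.mpr this).le
  rcases key x with hx | hx <;> rcases key y with hy | hy
  · have t1 := hc'.dist_triangle (u := x) (v := u) (w := y)
    have h2 : Gᶜ.dist u y ≤ 1 := by rw [SimpleGraph.dist_comm]; exact hy
    omega
  · have t1 := hc'.dist_triangle (u := x) (v := u) (w := y)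
    have t2 := hc'.dist_triangle (u := u) (v := w) (w := y)
    have h2 : Gᶜ.dist w y ≤ 1 := by rw [SimpleGraph.dist_comm]; exact hy
    omega
  · have t1 := hc'.dist_triangle (u := x) (v := w) (w := y)
    have t2 := hc'.dist_triangle (u := w) (v := u) (w := y)
    have hwu : Gᶜ.dist w u ≤ 1 := by rw [SimpleGraph.dist_comm]; exact huw
    have h2 : Gᶜ.dist u y ≤ 1 := by rw [SimpleGraph.dist_comm]; exact hy
    omega
  · have t1 := hc'.dist_triangle (u := x) (v := w) (w := y)
    have h2 : Gᶜ.dist w y ≤ 1 := by rw [SimpleGraph.dist_comm]; exact hy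
    omega

lemma packing_three_le_dist {G : SimpleGraph V} {B : Finset V} (hB : G.IsPacking B)
    {u w : V} (hu : u ∈ B) (hw : w ∈ B) (hne : u ≠ w) (hr : G.Reachable u w) :
    3 ≤ G.dist u w := by
  by_contra hlt
  exact common_of_dist_le_two hr (by omega) (hB u hu w hw hne)

lemma packing_card_le_one {G : SimpleGraph V} (hconn : G.Connected)
    (hsmall : ∀ u w : V, u ≠ w → G.dist u w ≤ 2)
    {B : Finset V} (hB : G.IsPacking B) : B.card ≤ 1 := by
  rw [Finset.card_le_one]
  intro a ha b hb
  by_contra hne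
  exact common_of_dist_le_two (hconn a b) (hsmall a b hne) (hB a ha b hb hne)

lemma packingNumber_eq_one [Fintype V] {G : SimpleGraph V} (hconn : G.Connected)
    (hsmall : ∀ u w : V, u ≠ w → G.dist u w ≤ 2) : G.packingNumber = 1 := by
  have hne : Nonempty V := hconn.nonempty
  obtain ⟨v0⟩ := hne
  have h1 : 1 ∈ {k | ∃ B : Finset V, G.IsPacking B ∧ B.card = k} := by
    refine ⟨{v0}, ?_, Finset.card_singleton v0⟩
    intro u hu w hw hne'
    rw [Finset.mem_singleton] at hu hw
    exact absurd (hu.trans hw.symm) hne'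
  have hub : ∀ k ∈ {k | ∃ B : Finset V, G.IsPacking B ∧ B.card = k}, k ≤ 1 := by
    rintro k ⟨B, hB, rfl⟩
    exact packing_card_le_one hconn hsmall hB
  exact le_antisymm (csSup_le ⟨1, h1⟩ hub) (le_csSup ⟨1, hub⟩ h1)

lemma packingNumber_mem [Fintype V] (G : SimpleGraph V) :
    ∃ B : Finset V, G.IsPacking B ∧ B.card = G.packingNumber := by
  have hne : {k | ∃ B : Finset V, G.IsPacking B ∧ B.card = k}.Nonempty :=
    ⟨0, ∅, fun u hu => absurd hu (Finset.notMem_empty u), Finset.card_empty⟩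
  have hbdd : BddAbove {k | ∃ B : Finset V, G.IsPacking B ∧ B.card = k} := by
    refine ⟨Fintype.card V, ?_⟩
    rintro k ⟨B, _, rfl⟩
    exact Finset.card_le_univ B
  exact Nat.sSup_mem hne hbdd

lemma core_bound [Fintype V] (H : SimpleGraph V) [DecidableRel H.Adj] (hc : H.Connected)
    (h3 : 3 ≤ H.diam) {B : Finset V} (hB : H.IsPacking B) :
    3 * B.card + 3 * H.maxDegree + 2 * H.diam ≤ 3 * Fintype.card V + 8 := by
  classical
  have hnv : Nonempty V := hc.nonempty
  obtain ⟨a, b, hab⟩ := SimpleGraph.exists_dist_eq_diam (G := H)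
  set M := H.diam with hM
  obtain ⟨p, hp⟩ := (hc a b).exists_walk_length_eq_dist
  rw [hab] at hp
  set x : ℕ → V := p.getVert with hx
  have fa : ∀ i, H.dist a (x i) ≤ i := by
    intro i
    induction i with
    | zero => simp [hx, SimpleGraph.dist_self]
    | succ n ih =>
      by_cases hn : n < p.length
      · have hadj := p.adj_getVert_succ hn
        have ht := hc.dist_triangle (u := a) (v := x n) (w := x (n+1))
        have hd1 : H.dist (x n) (x (n+1)) ≤ 1 := (SimpleGraph.dist_eq_one_iff_adj.mpr hadj).le
        omega
      · have hxb : x (n+1) = b := by rw [hx]; exact p.getVert_of_length_le (by omega)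
        rw [hxb, hab]
        omega
  have fb : ∀ k i, i + k = M → H.dist (x i) b ≤ k := by
    intro k
    induction k with
    | zero =>
      intro i hi
      have hip : i = p.length := by omega
      have hxb : x i = b := by rw [hx, hip]; exact p.getVert_length
      rw [hxb, SimpleGraph.dist_self]
    | succ n ih =>
      intro i hi
      have hn : i < p.length := by omega
      have hadj := p.adj_getVert_succ hn
      have ht := hc.dist_triangle (u := x i) (v := x (i+1)) (w := b)
      have hd1 : H.dist (x i) (x (i+1)) ≤ 1 := (SimpleGraph.dist_eq_one_iff_adj.mpr hadj).le
      have := ih (i+1) (by omega)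
      omega
  have fexact : ∀ i, i ≤ M → H.dist a (x i) = i := by
    intro i hi
    have h1 := fa i
    have h2 := fb (M - i) i (by omega)
    have ht := hc.dist_triangle (u := a) (v := x i) (w := b)
    rw [hab] at ht
    omega
  have fLB : ∀ i j, i ≤ j → j ≤ M → j - i ≤ H.dist (x i) (x j) := by
    intro i j hij hj
    have h1 := fexact i (le_trans hij hj)
    have h2 := fexact j hj
    have ht := hc.dist_triangle (u := a) (v := x i) (w := x j)
    omega
  have fUB : ∀ k i, i + k ≤ M → H.dist (x i) (x (i + k)) ≤ k := by
    intro k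
    induction k with
    | zero => intro i _; simp [SimpleGraph.dist_self]
    | succ n ih =>
      intro i hi
      have hn : i + n < p.length := by omega
      have hadj := p.adj_getVert_succ hn
      have ht := hc.dist_triangle (u := x i) (v := x (i+n)) (w := x (i+n+1))
      have hd1 : H.dist (x (i+n)) (x (i+n+1)) ≤ 1 := (SimpleGraph.dist_eq_one_iff_adj.mpr hadj).le
      have h2 := ih i (by omega)
      have he : i + (n+1) = i + n + 1 := by omega
      rw [he]
      omega
  have hinj : ∀ i j, i ≤ M → j ≤ M → x i = x j → i = j := by
    intro i j hi hj he
    by_contra hne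
    rcases Nat.lt_or_ge i j with hlt | hge
    · have := fLB i j (by omega) hj
      rw [he, SimpleGraph.dist_self] at this
      omega
    · have := fLB j i (by omega) hi
      rw [he, SimpleGraph.dist_self] at this
      omega
  obtain ⟨v, hv⟩ := H.exists_maximal_degree_vertex
  set P : Finset V := (Finset.range (M+1)).image x with hP
  have hPcard : P.card = M + 1 := by
    have hi : Set.InjOn x (Finset.range (M+1)) := by
      intro i hi j hj he
      rw [Finset.mem_coe, Finset.mem_range] at hi hj
      exact hinj i j (by omega) (by omega) he
    rw [hP, Finset.card_image_of_injOn hi, Finset.card_range]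
  set Nv : Finset V := insert v (H.neighborFinset v) with hNv
  have hNvcard : Nv.card = H.maxDegree + 1 := by
    rw [hNv, Finset.card_insert_of_notMem (SimpleGraph.notMem_neighborFinset_self H v),
      SimpleGraph.card_neighborFinset_eq_degree, ← hv]
  have memNv : ∀ z, z ∈ Nv ↔ z = v ∨ H.Adj v z := by
    intro z; rw [hNv]; simp [SimpleGraph.mem_neighborFinset, eq_comm]
  have distNv : ∀ z, z ∈ Nv → H.dist v z ≤ 1 := by
    intro z hz
    rcases (memNv z).mp hz with rfl | hadj
    · simp [SimpleGraph.dist_self]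
    · exact (SimpleGraph.dist_eq_one_iff_adj.mpr hadj).le
  have hmem : ∀ z, z ∈ Nv → v ∈ (insert z (H.neighborSet z) : Set V) := by
    intro z hz
    rcases (memNv z).mp hz with rfl | hadj
    · exact Set.mem_insert _ _
    · exact Set.mem_insert_of_mem _ hadj.symm
  set Iv : Finset ℕ := (Finset.range (M+1)).filter (fun i => x i ∈ Nv) with hIv
  set It : Finset ℕ := (Finset.range (M+1)).filter (fun i => x i ∈ B) with hIt
  have hIvmem : ∀ i ∈ Iv, i ≤ M ∧ x i ∈ Nv := by
    intro i hi; rw [hIv, Finset.mem_filter, Finset.mem_range] at hi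
    exact ⟨by omega, hi.2⟩
  have hItmem : ∀ i ∈ It, i ≤ M ∧ x i ∈ B := by
    intro i hi; rw [hIt, Finset.mem_filter, Finset.mem_range] at hi
    exact ⟨by omega, hi.2⟩
  have hwin : ∀ i ∈ Iv, ∀ j ∈ Iv, i ≤ j → j - i ≤ 2 := by
    intro i hi j hj hij
    obtain ⟨hiM, hix⟩ := hIvmem i hi
    obtain ⟨hjM, hjx⟩ := hIvmem j hj
    have h1 := fLB i j hij hjM
    have ht := hc.dist_triangle (u := x i) (v := v) (w := x j)
    have h2 : H.dist (x i) v ≤ 1 := by rw [SimpleGraph.dist_comm]; exact distNv _ hix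
    have h3' := distNv _ hjx
    omega
  have hIv3 : Iv.card ≤ 3 := nat_window_le_three hwin
  have hgap : ∀ i ∈ It, ∀ j ∈ It, i < j → 3 ≤ j - i := by
    intro i hi j hj hij
    obtain ⟨hiM, hix⟩ := hItmem i hi
    obtain ⟨hjM, hjx⟩ := hItmem j hj
    have hne : x i ≠ x j := fun he => by have := hinj i j hiM hjM he; omega
    have h1 := packing_three_le_dist hB hix hjx hne (hc _ _)
    have h2 := fUB (j - i) i (by omega)
    have he : i + (j - i) = j := by omega
    rw [he] at h2
    omega
  have hIt1 : It.card ≤ M/3 + 1 := nat_sparse_card (by rw [hIt]; exact Finset.filter_subset _ _) hgap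
  have hA : (Nv ∩ P).card ≤ Iv.card := by
    have hsub : Nv ∩ P ⊆ Iv.image x := by
      intro z hz
      rw [Finset.mem_inter] at hz
      obtain ⟨hz1, hz2⟩ := hz
      rw [hP, Finset.mem_image] at hz2
      obtain ⟨i, hi, rfl⟩ := hz2
      exact Finset.mem_image_of_mem x (by rw [hIv, Finset.mem_filter]; exact ⟨hi, hz1⟩)
    calc (Nv ∩ P).card ≤ (Iv.image x).card := Finset.card_le_card hsub
      _ ≤ Iv.card := Finset.card_image_le
  have hT : (B ∩ P).card ≤ It.card := by
    have hsub : B ∩ P ⊆ It.image x := by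
      intro z hz
      rw [Finset.mem_inter] at hz
      obtain ⟨hz1, hz2⟩ := hz
      rw [hP, Finset.mem_image] at hz2
      obtain ⟨i, hi, rfl⟩ := hz2
      exact Finset.mem_image_of_mem x (by rw [hIt, Finset.mem_filter]; exact ⟨hi, hz1⟩)
    calc (B ∩ P).card ≤ (It.image x).card := Finset.card_le_card hsub
      _ ≤ It.card := Finset.card_image_le
  have hC : (B ∩ Nv).card ≤ 1 := by
    rw [Finset.card_le_one]
    intro b1 hb1 b2 hb2
    by_contra hne
    rw [Finset.mem_inter] at hb1 hb2
    have hd := hB b1 hb1.1 b2 hb2.1 hne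
    rw [Set.disjoint_left] at hd
    exact hd (hmem b1 hb1.2) (hmem b2 hb2.2)
  have hcount : P.card + (Nv \ P).card + ((B \ P) \ Nv).card ≤ Fintype.card V := by
    have hd1 : Disjoint P (Nv \ P) := Finset.disjoint_sdiff
    have hd2 : Disjoint (P ∪ (Nv \ P)) ((B \ P) \ Nv) := by
      rw [Finset.disjoint_left]
      intro z hz hz'
      rw [Finset.mem_union] at hz
      rw [Finset.mem_sdiff, Finset.mem_sdiff] at hz'
      rcases hz with h | h
      · exact hz'.1.2 h
      · exact hz'.2 (Finset.mem_sdiff.mp h).1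
    calc P.card + (Nv \ P).card + ((B \ P) \ Nv).card
        = (P ∪ (Nv \ P) ∪ ((B \ P) \ Nv)).card := by
          rw [Finset.card_union_of_disjoint hd2, Finset.card_union_of_disjoint hd1]
      _ ≤ Fintype.card V := Finset.card_le_univ _
  have e2 : (Nv ∩ P).card + (Nv \ P).card = Nv.card := Finset.card_inter_add_card_sdiff Nv P
  have e3 : (B ∩ P).card + (B \ P).card = B.card := Finset.card_inter_add_card_sdiff B P
  have e4 : ((B \ P) ∩ Nv).card + ((B \ P) \ Nv).card = (B \ P).card :=
    Finset.card_inter_add_card_sdiff (B \ P) Nv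
  have hC' : ((B \ P) ∩ Nv).card ≤ (B ∩ Nv).card := by
    apply Finset.card_le_card
    intro z hz
    rw [Finset.mem_inter] at hz ⊢
    exact ⟨(Finset.mem_sdiff.mp hz.1).1, hz.2⟩
  by_cases hm3 : M % 3 = 0
  swap
  · omega
  by_cases hAfull : 3 ≤ Iv.card
  swap
  · omega
  by_cases hTfull : M/3 + 1 ≤ It.card
  swap
  · omega
  by_cases hCfull : 1 ≤ ((B \ P) ∩ Nv).card
  swap
  · omega
  exfalso
  obtain ⟨b0, hb0⟩ := Finset.card_pos.mp hCfull
  rw [Finset.mem_inter, Finset.mem_sdiff] at hb0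
  have hIvne : Iv.Nonempty := Finset.card_pos.mp (by omega)
  set m := Iv.min' hIvne with hmdef
  have hIvsub : Iv ⊆ Finset.Icc m (m+2) := by
    intro i hi
    rw [Finset.mem_Icc]
    have h1 := Iv.min'_le i hi
    have h2 := hwin m (Iv.min'_mem hIvne) i hi h1
    omega
  have hIveq : Iv = Finset.Icc m (m+2) :=
    Finset.eq_of_subset_of_card_le hIvsub (by rw [Nat.card_Icc]; omega)
  have hm2M : m + 2 ≤ M := by
    have : m + 2 ∈ Iv := by rw [hIveq, Finset.mem_Icc]; omega
    exact (hIvmem _ this).1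
  obtain ⟨j, hjIt, hj1, hj2⟩ := nat_sparse_hits
    (by rw [hIt]; exact Finset.filter_subset _ _) hgap hm3 hTfull hm2M
  have hjIv : j ∈ Iv := by rw [hIveq, Finset.mem_Icc]; exact ⟨hj1, hj2⟩
  obtain ⟨hjM, hjB⟩ := hItmem j hjIt
  have hjNv : x j ∈ Nv := (hIvmem j hjIv).2
  have hjP : x j ∈ P := by
    rw [hP]; exact Finset.mem_image_of_mem x (Finset.mem_range.mpr (by omega))
  have hne : b0 ≠ x j := fun he => hb0.1.2 (he ▸ hjP)
  have hd := hB b0 hb0.1.1 (x j) hjB hne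
  rw [Set.disjoint_left] at hd
  exact hd (hmem b0 hb0.2) (hmem (x j) hjNv)


lemma aux_main {V : Type*} [Fintype V] (H H' : SimpleGraph V)
    [DecidableRel H.Adj] [DecidableRel H'.Adj] (hcompl : H' = Hᶜ)
    (hc : H.Connected) (hc' : H'.Connected)
    (h3 : 3 ≤ H.diam) (hlt : H'.diam < H.diam) :
    ((H.packingNumber + H'.packingNumber : ℤ) ≤ (Fintype.card V : ℤ) -
        ⌈((2 * H.diam + 3 * (min H.maxDegree H'.maxDegree) - 11 : ℤ) : ℚ) / 3⌉) ∧
      ((H.packingNumber * H'.packingNumber : ℤ) ≤ (Fintype.card V : ℤ) -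
        ⌈((2 * H.diam + 3 * (min H.maxDegree H'.maxDegree) - 8 : ℤ) : ℚ) / 3⌉) := by
  subst hcompl
  have hnv : Nonempty V := hc.nonempty
  have hsmall : ∀ u w : V, u ≠ w → Hᶜ.dist u w ≤ 2 := by
    have hd2 : Hᶜ.diam ≤ 2 := by
      by_contra hgt
      push_neg at hgt
      obtain ⟨u, w, huw⟩ := SimpleGraph.exists_dist_eq_diam (G := Hᶜ)
      have h3' : 3 ≤ Hᶜ.dist u w := by omega
      have hall := compl_dist_le_three (G := Hᶜ) (by rw [compl_compl]; exact hc) h3'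
      rw [compl_compl] at hall
      obtain ⟨a, b, hab⟩ := SimpleGraph.exists_dist_eq_diam (G := H)
      have : H.diam ≤ 3 := hab ▸ hall a b
      omega
    intro u w hne
    exact le_trans (SimpleGraph.dist_le_diam (ediam_ne_top_of_connected hc')) hd2
  have hone : Hᶜ.packingNumber = 1 := packingNumber_eq_one hc' hsmall
  obtain ⟨B, hBpack, hBcard⟩ := packingNumber_mem H
  have hcore := core_bound H hc h3 hBpack
  rw [hBcard] at hcore
  have hmin : min H.maxDegree Hᶜ.maxDegree ≤ H.maxDegree := min_le_left _ _
  have h1 : min ((H.maxDegree : ℚ)) ((Hᶜ.maxDegree : ℚ)) ≤ (H.maxDegree : ℚ) :=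
    min_le_left _ _
  have h1' : ((min H.maxDegree Hᶜ.maxDegree : ℕ) : ℚ) ≤ (H.maxDegree : ℚ) := by
    exact_mod_cast hmin
  have h2 : (3 * (H.packingNumber : ℚ) + 3 * (H.maxDegree : ℚ) + 2 * (H.diam : ℚ)) ≤
      3 * (Fintype.card V : ℚ) + 8 := by exact_mod_cast hcore
  constructor
  · rw [hone]
    simp only [Nat.cast_one]
    rw [le_sub_comm, Int.ceil_le, div_le_iff₀ (by norm_num : (0:ℚ) < 3)]
    push_cast
    linarith
  · rw [hone]
    simp only [Nat.cast_one, mul_one]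
    rw [le_sub_comm, Int.ceil_le, div_le_iff₀ (by norm_num : (0:ℚ) < 3)]
    push_cast
    linarith

end Helpers

open scoped Classical in
theorem stmt_15 {V : Type*} [Fintype V] (G : SimpleGraph V)
    (hc : G.Connected) (hc' : Gᶜ.Connected)
    (hne : G.diam ≠ Gᶜ.diam) (hM : 3 ≤ max G.diam Gᶜ.diam) :
    (G.packingNumber + Gᶜ.packingNumber : ℤ) ≤ (Fintype.card V : ℤ) -
        ⌈((2 * (max G.diam Gᶜ.diam) + 3 * (min G.maxDegree Gᶜ.maxDegree) - 11 : ℤ) : ℚ) / 3⌉ ∧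
      (G.packingNumber * Gᶜ.packingNumber : ℤ) ≤ (Fintype.card V : ℤ) -
        ⌈((2 * (max G.diam Gᶜ.diam) + 3 * (min G.maxDegree Gᶜ.maxDegree) - 8 : ℤ) : ℚ) / 3⌉ := by
  rcases lt_or_gt_of_ne hne with hlt | hgt
  · have hmax : max G.diam Gᶜ.diam = Gᶜ.diam := max_eq_right hlt.le
    rw [hmax] at hM ⊢
    have h := aux_main Gᶜ G (compl_compl G).symm hc' hc hM hlt
    rw [min_comm G.maxDegree Gᶜ.maxDegree]
    constructor
    · linarith [h.1]
    · rw [mul_comm ((G.packingNumber : ℤ)) ((Gᶜ.packingNumber : ℤ))]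
      exact h.2
  · have hmax : max G.diam Gᶜ.diam = G.diam := max_eq_left hgt.le
    rw [hmax] at hM ⊢
    exact aux_main G Gᶜ rfl hc hc' hM hgt
end

section
/- For any connected graph G of order n, the open packing number satisfies ρ_o(G) ≤ n − Δ(G) + 1, with equality if and only if Δ(G) = n − 1 and δ(G) = 1. -/
open SimpleGraph

section Aux

set_option linter.unusedSectionVars false

variable {V : Type*} [Fintype V] [DecidableEq V] {G : SimpleGraph V} [DecidableRel G.Adj]

lemma aux_bdd : BddAbove {k | ∃ B : Finset V, G.IsOpenPacking B ∧ B.card = k} :=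
  ⟨Fintype.card V, fun _ ⟨B, _, hB⟩ => hB ▸ B.card_le_univ⟩

lemma aux_nonempty : {k | ∃ B : Finset V, G.IsOpenPacking B ∧ B.card = k}.Nonempty :=
  ⟨0, ∅, fun _ _ _ hu => by simp at hu, rfl⟩

lemma aux_walk_closed {P : V → Prop}
    (hP : ∀ x y, P x → G.Adj x y → P y) {a b : V} (w : G.Walk a b) (ha : P a) : P b := by
  induction w with
  | nil => exact ha
  | cons h p ih => exact ih (hP _ _ ha h)

lemma aux_inter_card {B : Finset V} (hB : G.IsOpenPacking B) (v : V) :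
    (B ∩ G.neighborFinset v).card ≤ 1 := by
  refine Finset.card_le_one.2 fun u hu w hw => ?_
  simp only [Finset.mem_inter, mem_neighborFinset] at hu hw
  exact hB v u w hu.1 hw.1 hu.2 hw.2

lemma aux_sdiff_card {B : Finset V} (v : V) :
    (B \ G.neighborFinset v).card ≤ Fintype.card V - G.degree v := by
  have hsub : B \ G.neighborFinset v ⊆ Finset.univ \ G.neighborFinset v := by
    intro x hx
    simp only [Finset.mem_sdiff, Finset.mem_univ, true_and] at hx ⊢
    exact hx.2
  calc (B \ G.neighborFinset v).card ≤ (Finset.univ \ G.neighborFinset v).card :=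
      Finset.card_le_card hsub
    _ = Fintype.card V - G.degree v := by
      rw [Finset.card_sdiff_of_subset (Finset.subset_univ _), Finset.card_univ,
        card_neighborFinset_eq_degree]

lemma aux_card_le {B : Finset V} (hB : G.IsOpenPacking B) (v : V) :
    B.card ≤ (Fintype.card V - G.degree v) + 1 :=
  calc B.card = (B \ G.neighborFinset v).card + (B ∩ G.neighborFinset v).card :=
      (Finset.card_sdiff_add_card_inter B _).symm
    _ ≤ _ := add_le_add (aux_sdiff_card v) (aux_inter_card hB v)

end Aux

theorem stmt_16 {V : Type*} [Fintype V] (G : SimpleGraph V) [DecidableRel G.Adj]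
    (hc : G.Connected) (hn : 2 ≤ Fintype.card V) :
    G.openPackingNumber ≤ Fintype.card V - G.maxDegree + 1 ∧
      (G.openPackingNumber = Fintype.card V - G.maxDegree + 1 ↔
        G.maxDegree = Fintype.card V - 1 ∧ G.minDegree = 1) := by
  classical
  have hne : Nonempty V := Fintype.card_pos_iff.mp (by omega)
  obtain ⟨v, hv⟩ := G.exists_maximal_degree_vertex
  set n := Fintype.card V with hn'
  have hdlt : G.degree v < n := G.degree_lt_card_verts v
  -- every vertex has positive degree
  have hdegpos : ∀ w : V, 0 < G.degree w := by
    intro w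
    obtain ⟨z, hz⟩ := Fintype.exists_ne_of_one_lt_card (by omega) w
    obtain ⟨p⟩ := hc.preconnected w z
    cases p with
    | nil => exact (hz rfl).elim
    | cons h _ => exact G.degree_pos_iff_exists_adj w |>.mpr ⟨_, h⟩
  have hub : G.openPackingNumber ≤ n - G.maxDegree + 1 := by
    refine csSup_le' ?_
    rintro k ⟨B, hB, rfl⟩
    rw [hv]
    exact aux_card_le hB v
  refine ⟨hub, ?_, ?_⟩
  · -- forward direction
    intro heq
    have hmem : G.openPackingNumber ∈
        {k | ∃ B : Finset V, G.IsOpenPacking B ∧ B.card = k} :=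
      Nat.sSup_mem aux_nonempty aux_bdd
    obtain ⟨B, hB, hcard⟩ := hmem
    rw [heq, hv] at hcard
    set N := G.neighborFinset v with hN
    have h1 : (B ∩ N).card ≤ 1 := aux_inter_card hB v
    have h2 : (B \ N).card ≤ n - G.degree v := aux_sdiff_card v
    have hsum : (B \ N).card + (B ∩ N).card = B.card :=
      Finset.card_sdiff_add_card_inter B N
    have hAcard : (Finset.univ \ N).card = n - G.degree v := by
      rw [Finset.card_sdiff_of_subset (Finset.subset_univ _), Finset.card_univ, hN,
        card_neighborFinset_eq_degree]
    have h2' : (B \ N).card = n - G.degree v := by omega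
    have h1' : (B ∩ N).card = 1 := by omega
    have hBN : B \ N = Finset.univ \ N :=
      Finset.eq_of_subset_of_card_le
        (fun x hx => Finset.mem_sdiff.2 ⟨Finset.mem_univ x, (Finset.mem_sdiff.1 hx).2⟩)
        (by omega)
    have hAB : ∀ x : V, x ∉ N → x ∈ B := by
      intro x hx
      have : x ∈ B \ N := by rw [hBN]; exact Finset.mem_sdiff.2 ⟨Finset.mem_univ x, hx⟩
      exact (Finset.mem_sdiff.1 this).1
    obtain ⟨u, hu⟩ := Finset.card_eq_one.mp h1'
    have huB : u ∈ B := (Finset.mem_inter.1 (hu ▸ Finset.mem_singleton_self u)).1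
    have huN : G.Adj v u :=
      (G.mem_neighborFinset v u).mp (Finset.mem_inter.1 (hu ▸ Finset.mem_singleton_self u)).2
    have hvB : v ∈ B := hAB v (by simp [hN])
    have hΔ : G.maxDegree = n - 1 := by
      by_contra hne'
      have hΔlt : G.degree v < n - 1 := by omega
      -- there is a vertex z ∉ N ∪ {v}
      have hA2 : 1 < (Finset.univ \ N).card := by omega
      obtain ⟨z, hzA, hzv⟩ := Finset.exists_mem_ne hA2 v
      have hzN : z ∉ N := (Finset.mem_sdiff.1 hzA).2
      -- the set {x | x ∉ N ∧ x ≠ v} is closed under adjacency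
      have hclosed : ∀ x y, (x ∉ N ∧ x ≠ v) → G.Adj x y → (y ∉ N ∧ y ≠ v) := by
        rintro x y ⟨hx1, hx2⟩ hxy
        have hxB : x ∈ B := hAB x hx1
        constructor
        · intro hyN
          have hvy : G.Adj v y := (G.mem_neighborFinset v y).mp hyN
          exact hx2 (hB y x v hxB hvB hxy.symm hvy.symm)
        · intro hyv
          rw [hyv] at hxy
          exact hx1 ((G.mem_neighborFinset v x).mpr hxy.symm)
      obtain ⟨p⟩ := hc.preconnected z v
      exact (aux_walk_closed hclosed p ⟨hzN, hzv⟩).2 rfl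
    -- now min degree = 1
    have hvall : ∀ w, w ≠ v → G.Adj v w := by
      have hsub : N ⊆ Finset.univ.erase v := by
        intro x hx
        exact Finset.mem_erase.2
          ⟨(G.ne_of_adj ((G.mem_neighborFinset v x).mp hx)).symm, Finset.mem_univ x⟩
      have hNe : N = Finset.univ.erase v := by
        refine Finset.eq_of_subset_of_card_le hsub ?_
        rw [Finset.card_erase_of_mem (Finset.mem_univ v), Finset.card_univ]
        have : N.card = G.degree v := card_neighborFinset_eq_degree G v
        omega
      intro w hw
      have hwN : w ∈ N := by rw [hNe]; exact Finset.mem_erase.2 ⟨hw, Finset.mem_univ w⟩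
      exact (G.mem_neighborFinset v w).mp hwN
    have huv : u ≠ v := (G.ne_of_adj huN).symm
    have hdegu : G.degree u = 1 := by
      have hNu : G.neighborFinset u = {v} := by
        refine Finset.eq_singleton_iff_unique_mem.2
          ⟨(G.mem_neighborFinset u v).mpr huN.symm, ?_⟩
        intro w hw
        have hwu : G.Adj u w := (G.mem_neighborFinset u w).mp hw
        by_contra hwv
        have hvw : G.Adj v w := hvall w hwv
        exact huv (hB w u v huB hvB hwu.symm hvw.symm)
      rw [← card_neighborFinset_eq_degree, hNu, Finset.card_singleton]
    have hδle : G.minDegree ≤ 1 := hdegu ▸ G.minDegree_le_degree u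
    obtain ⟨w0, hw0⟩ := G.exists_minimal_degree_vertex
    have hδge : 1 ≤ G.minDegree := by rw [hw0]; exact hdegpos w0
    exact ⟨hΔ, le_antisymm hδle hδge⟩
  · -- backward direction
    rintro ⟨hΔ, hδ⟩
    obtain ⟨u, hu⟩ := G.exists_minimal_degree_vertex
    have hdu : G.degree u = 1 := by rw [← hu, hδ]
    obtain ⟨v0, hv0⟩ : ∃ a, G.neighborFinset u = {a} :=
      Finset.card_eq_one.mp (by rw [card_neighborFinset_eq_degree]; exact hdu)
    have hadj : G.Adj u v0 := (G.mem_neighborFinset u v0).mp (by rw [hv0]; exact Finset.mem_singleton_self v0)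
    have huniq : ∀ w, G.Adj u w → w = v0 := fun w hw =>
      Finset.mem_singleton.mp (by rw [← hv0]; exact (G.mem_neighborFinset u w).mpr hw)
    have hop : G.IsOpenPacking {u, v0} := by
      intro x a b ha hb hxa hxb
      simp only [Finset.mem_insert, Finset.mem_singleton] at ha hb
      rcases ha with rfl | rfl <;> rcases hb with rfl | rfl
      · rfl
      · have hx := huniq x hxa.symm; subst hx; exact (G.irrefl hxb).elim
      · have hx := huniq x hxb.symm; subst hx; exact (G.irrefl hxa).elim
      · rfl
    have h2 : 2 ≤ G.openPackingNumber :=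
      le_csSup aux_bdd ⟨{u, v0}, hop, Finset.card_pair (G.ne_of_adj hadj)⟩
    have hΔn : n - G.maxDegree + 1 = 2 := by rw [hΔ]; omega
    omega
end

section
/- If G is a connected graph of order n ≥ 3 with ω(G) ≥ 3 and ρ_o(G) = n − ω(G), then Δ(G) ∈ {ω(G), ω(G) + 1}; moreover, if Δ(G) = ω(G) + 1, then Δ(G) = n − 1 and δ(G) = 1. -/
open SimpleGraph

private lemma op_bdd {V : Type*} [Fintype V] (G : SimpleGraph V) :
    BddAbove {k | ∃ B : Finset V, G.IsOpenPacking B ∧ B.card = k} :=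
  ⟨Fintype.card V, fun _ ⟨B, _, hB⟩ => hB ▸ B.card_le_univ⟩

private lemma exists_op {V : Type*} [Fintype V] (G : SimpleGraph V) :
    ∃ B : Finset V, G.IsOpenPacking B ∧ B.card = G.openPackingNumber := by
  refine Nat.sSup_mem ⟨0, ?_⟩ (op_bdd G)
  exact ⟨∅, fun v u w hu _ _ _ => absurd hu (by simp), Finset.card_empty⟩

private lemma one_le_op {V : Type*} [Fintype V] [Nonempty V] (G : SimpleGraph V) :
    1 ≤ G.openPackingNumber := by
  obtain ⟨x⟩ := ‹Nonempty V›
  refine le_csSup (op_bdd G) ?_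
  exact ⟨{x}, fun _ u w hu hw _ _ => by
      simp only [Finset.mem_singleton] at hu hw; rw [hu, hw], by simp⟩

private lemma inter_card_le_one {V : Type*} [Fintype V] [DecidableEq V] (G : SimpleGraph V)
    [DecidableRel G.Adj] {B : Finset V} (hB : G.IsOpenPacking B) (v : V) :
    (G.neighborFinset v ∩ B).card ≤ 1 := by
  refine Finset.card_le_one.mpr fun a ha b hb => ?_
  simp only [Finset.mem_inter, mem_neighborFinset] at ha hb
  exact hB v a b ha.2 hb.2 ha.1 hb.1

private lemma walk_closed {V : Type*} {G : SimpleGraph V} {P : V → Prop}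
    (hP : ∀ ⦃a b⦄, P a → G.Adj a b → P b) :
    ∀ {a b : V}, G.Walk a b → P a → P b := by
  intro a b p
  induction p with
  | nil => exact id
  | cons h _ ih => exact fun ha => ih (hP ha h)

theorem stmt_18 {V : Type*} [Fintype V] (G : SimpleGraph V) [DecidableRel G.Adj]
    (hc : G.Connected) (hn : 3 ≤ Fintype.card V) (hw : 3 ≤ G.cliqueNum)
    (h : G.openPackingNumber = Fintype.card V - G.cliqueNum) :
    (G.maxDegree = G.cliqueNum ∨ G.maxDegree = G.cliqueNum + 1) ∧
      (G.maxDegree = G.cliqueNum + 1 →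
        G.maxDegree = Fintype.card V - 1 ∧ G.minDegree = 1) := by
  classical
  have hne : Nonempty V := Fintype.card_pos_iff.mp (by omega)
  obtain ⟨K, hK⟩ := G.exists_isNClique_cliqueNum
  have hKc : K.card = G.cliqueNum := hK.card_eq
  have hωn : G.cliqueNum ≤ Fintype.card V := by
    rw [← hKc]; exact K.card_le_univ
  have hωltn : G.cliqueNum < Fintype.card V := by
    have := one_le_op G
    omega
  obtain ⟨B, hB, hBcard⟩ := exists_op G
  have hBcard' : B.card = Fintype.card V - G.cliqueNum := by rw [hBcard, h]
  have hub : G.maxDegree ≤ G.cliqueNum + 1 := by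
    obtain ⟨v, hv⟩ := G.exists_maximal_degree_vertex
    rw [hv]
    have h1 := inter_card_le_one G hB v
    have h2 := Finset.card_sdiff_add_card_inter (G.neighborFinset v) B
    have h3 : G.neighborFinset v \ B ⊆ Finset.univ \ B :=
      Finset.sdiff_subset_sdiff (Finset.subset_univ _) le_rfl
    have h4 := Finset.card_le_card h3
    rw [Finset.card_univ_diff, hBcard'] at h4
    rw [G.card_neighborFinset_eq_degree] at h2
    omega
  have hlb : G.cliqueNum ≤ G.maxDegree := by
    obtain ⟨x, hx⟩ := Finset.card_pos.mp (by rw [hKc]; omega : 0 < K.card)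
    have hKsub : K.erase x ⊆ G.neighborFinset x := by
      intro y hy
      rw [mem_neighborFinset]
      exact hK.isClique (Finset.mem_erase.mp hy).2 hx (Finset.mem_erase.mp hy).1 |>.symm
    have hdx : G.cliqueNum - 1 ≤ G.degree x := by
      have := Finset.card_le_card hKsub
      rw [Finset.card_erase_of_mem hx, hKc, G.card_neighborFinset_eq_degree] at this
      exact this
    have hdx' : G.cliqueNum - 1 ≤ G.maxDegree := le_trans hdx (G.degree_le_maxDegree x)
    by_contra hcon
    have hmax : G.maxDegree = G.cliqueNum - 1 := by omega
    have hclosed : ∀ ⦃a b : V⦄, a ∈ K → G.Adj a b → b ∈ K := by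
      intro a b ha hab
      have hsub : K.erase a ⊆ G.neighborFinset a := by
        intro y hy
        rw [mem_neighborFinset]
        exact hK.isClique (Finset.mem_erase.mp hy).2 ha (Finset.mem_erase.mp hy).1 |>.symm
      have heq : K.erase a = G.neighborFinset a := by
        refine Finset.eq_of_subset_of_card_le hsub ?_
        rw [Finset.card_erase_of_mem ha, hKc, G.card_neighborFinset_eq_degree]
        calc G.degree a ≤ G.maxDegree := G.degree_le_maxDegree a
          _ = G.cliqueNum - 1 := hmax
      have : b ∈ K.erase a := heq ▸ (mem_neighborFinset G a b).mpr hab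
      exact Finset.mem_erase.mp this |>.2
    have hall : ∀ w : V, w ∈ K := by
      intro w
      obtain ⟨p⟩ := hc.preconnected x w
      exact walk_closed hclosed p hx
    have hle : Fintype.card V ≤ K.card := by
      rw [← Finset.card_univ]
      exact Finset.card_le_card fun w _ => hall w
    omega
  refine ⟨by omega, fun hΔ => ?_⟩
  obtain ⟨v, hv⟩ := G.exists_maximal_degree_vertex
  have hdeg : G.degree v = G.cliqueNum + 1 := by rw [← hv]; exact hΔ
  have h1 := inter_card_le_one G hB v
  have h2 := Finset.card_sdiff_add_card_inter (G.neighborFinset v) B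
  rw [G.card_neighborFinset_eq_degree, hdeg] at h2
  have h3 : G.neighborFinset v \ B ⊆ Finset.univ \ B :=
    Finset.sdiff_subset_sdiff (Finset.subset_univ _) le_rfl
  have h4 : (Finset.univ \ B).card = G.cliqueNum := by
    rw [Finset.card_univ_diff, hBcard']; omega
  have heq : G.neighborFinset v \ B = Finset.univ \ B :=
    Finset.eq_of_subset_of_card_le h3 (by omega)
  have hvB : v ∈ B := by
    by_contra hvB
    have : v ∈ G.neighborFinset v \ B := heq ▸ Finset.mem_sdiff.mpr ⟨Finset.mem_univ v, hvB⟩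
    exact G.notMem_neighborFinset_self v (Finset.mem_sdiff.mp this).1
  have hnotB : ∀ w : V, w ∉ B → w ∈ G.neighborFinset v := by
    intro w hw
    have : w ∈ G.neighborFinset v \ B := heq ▸ Finset.mem_sdiff.mpr ⟨Finset.mem_univ w, hw⟩
    exact (Finset.mem_sdiff.mp this).1
  have hclosed : ∀ ⦃a b : V⦄, a ∈ insert v (G.neighborFinset v) → G.Adj a b →
      b ∈ insert v (G.neighborFinset v) := by
    intro a b ha hab
    rcases Finset.mem_insert.mp ha with rfl | haN
    · exact Finset.mem_insert.mpr (Or.inr ((mem_neighborFinset G a b).mpr hab))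
    · by_contra hb
      rw [Finset.mem_insert, mem_neighborFinset] at hb
      push_neg at hb
      have hbB : b ∈ B := by
        by_contra hbB
        exact hb.2 ((mem_neighborFinset G v b).mp (hnotB b hbB))
      have hav : G.Adj a v := ((mem_neighborFinset G v a).mp haN).symm
      exact hb.1 (hB a b v hbB hvB hab hav)
  have hall : ∀ w : V, w ∈ insert v (G.neighborFinset v) := by
    intro w
    obtain ⟨p⟩ := hc.preconnected v w
    exact walk_closed hclosed p (Finset.mem_insert_self v _)
  have hScard : (insert v (G.neighborFinset v)).card = G.cliqueNum + 2 := by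
    rw [Finset.card_insert_of_notMem (G.notMem_neighborFinset_self v),
      G.card_neighborFinset_eq_degree, hdeg]
  have hcardn : Fintype.card V = G.cliqueNum + 2 := by
    have h5 : Fintype.card V ≤ (insert v (G.neighborFinset v)).card := by
      rw [← Finset.card_univ]
      exact Finset.card_le_card fun w _ => hall w
    have h6 := (insert v (G.neighborFinset v)).card_le_univ
    omega
  refine ⟨by omega, ?_⟩
  have hB2 : B.card = 2 := by omega
  obtain ⟨u, hu⟩ : ∃ u, u ∈ B.erase v := by
    have : (B.erase v).card = 1 := by rw [Finset.card_erase_of_mem hvB, hB2]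
    exact Finset.card_pos.mp (by omega)
  have huB : u ∈ B := (Finset.mem_erase.mp hu).2
  have hune : u ≠ v := (Finset.mem_erase.mp hu).1
  have huN : G.Adj v u := by
    rcases Finset.mem_insert.mp (hall u) with rfl | h'
    · exact absurd rfl hune
    · exact (mem_neighborFinset G v u).mp h'
  have hNu : G.neighborFinset u = {v} := by
    ext y
    simp only [Finset.mem_singleton, mem_neighborFinset]
    constructor
    · intro hy
      by_contra hyv
      have hyN : G.Adj v y := by
        rcases Finset.mem_insert.mp (hall y) with rfl | h'
        · exact absurd rfl hyv
        · exact (mem_neighborFinset G v y).mp h'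
      exact hune (hB y u v huB hvB hy.symm hyN.symm)
    · intro hy; rw [hy]; exact huN.symm
  have hdu : G.degree u = 1 := by
    rw [← G.card_neighborFinset_eq_degree, hNu, Finset.card_singleton]
  have hle : G.minDegree ≤ 1 := hdu ▸ G.minDegree_le_degree u
  have hge : 1 ≤ G.minDegree := by
    obtain ⟨w, hw⟩ := G.exists_minimal_degree_vertex
    obtain ⟨w', hw'⟩ := Fintype.exists_ne_of_one_lt_card (by omega) w
    obtain ⟨p⟩ := hc.preconnected w w'
    cases p with
    | nil => exact absurd rfl hw'
    | cons hadj _ =>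
      rw [hw]
      exact (G.degree_pos_iff_exists_adj w).mpr ⟨_, hadj⟩
  omega
end
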